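/- arXiv:1805.08478 — 3 statements merged into one kernel-verified Lean document; each statement's English description precedes it below -/
import Mathlib

section
/- Let X be a CAT(0) cube complex with no extremal vertices and let x1, x2, y ∈ ∂X satisfy m(x1,x2,y) ∈ X. Then x1 and x2 fail to be opposite with respect to y if and only if there exists a point z ∈ ∂X and a,b,c ∈ ℕ ∪ {+∞} such that crt(x1,x2,y,z) = ⟪a:b:c⟫ and a < min{b,c} < +∞. -/
/-!
We use the standard combinatorial model of a CAT(0) cube complex: it is identified
with its vertex set endowed with the combinatorial (ℓ¹) metric, i.e. with a median
graph `G` on a vertex type `V`.  Halfspaces are realised as the vertex sets of the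
two sides of the hyperplane dual to an edge, the Roller compactification `X̄` is the
set of ultrafilters of halfspaces, vertices embedding via principal ultrafilters,
and the Roller boundary `∂X` consists of the non-principal ultrafilters.
-/

open scoped ENNReal
open Set

namespace CCCR

variable {V V' : Type*}

/-- The interval between two vertices w.r.t. the combinatorial metric. -/
def vInterval (G : SimpleGraph V) (u v : V) : Set V :=
  {w : V | G.dist u w + G.dist w v = G.dist u v}

/-- Combinatorial model of a CAT(0) cube complex (identified with its vertex set,
endowed with the combinatorial metric): a connected median graph. -/
def IsCCC (G : SimpleGraph V) : Prop :=
  G.Connected ∧ ∀ x y z : V, ∃! m : V,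
    m ∈ vInterval G x y ∧ m ∈ vInterval G y z ∧ m ∈ vInterval G z x

/-- Halfspaces of the cube complex: the sides of the hyperplane dual to an edge. -/
def IsHalfspace (G : SimpleGraph V) (h : Set V) : Prop :=
  ∃ u v : V, G.Adj u v ∧ h = {w : V | G.dist w v < G.dist w u}

/-- The halfspace dual to the (oriented) edge `(u,v)` containing `v`. -/
def edgeHalf (G : SimpleGraph V) (u v : V) : Set V :=
  {w : V | G.dist w v < G.dist w u}

/-- The hyperplane (wall) dual to the edge `(u,v)`, recorded as its pair of sides. -/
def wallOf (G : SimpleGraph V) (u v : V) : Set (Set V) :=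
  {edgeHalf G u v, (edgeHalf G u v)ᶜ}

/-- Two (necessarily distinct) hyperplanes, with respective sides `h` and `k`,
are transverse: all four quarter-spaces are nonempty. -/
def Transv (h k : Set V) : Prop :=
  (h ∩ k).Nonempty ∧ (h ∩ kᶜ).Nonempty ∧ (hᶜ ∩ k).Nonempty ∧ (hᶜ ∩ kᶜ).Nonempty

/-- An ultrafilter of halfspaces: a point of the Roller compactification X̄.
It contains exactly one side of each hyperplane, and any two members intersect. -/
def IsUltra (G : SimpleGraph V) (σ : Set (Set V)) : Prop :=
  (∀ h ∈ σ, IsHalfspace G h) ∧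
  (∀ h : Set V, IsHalfspace G h → (h ∈ σ ↔ hᶜ ∉ σ)) ∧
  (∀ h ∈ σ, ∀ k ∈ σ, (h ∩ k).Nonempty)

/-- The principal ultrafilter of a vertex, i.e. the image of `v` in X̄. -/
def princ (G : SimpleGraph V) (v : V) : Set (Set V) :=
  {h : Set V | IsHalfspace G h ∧ v ∈ h}

/-- A point of the Roller boundary ∂X = X̄ ∖ X: a non-principal ultrafilter. -/
def IsBdryPt (G : SimpleGraph V) (σ : Set (Set V)) : Prop :=
  IsUltra G σ ∧ ∀ v : V, σ ≠ princ G v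

/-- The Roller boundary ∂X as a type. -/
abbrev Bdry (G : SimpleGraph V) : Type _ := {σ : Set (Set V) // IsBdryPt G σ}

/-- The Gromov product (x·y)_v = #𝒲(v | x, y) ∈ ℕ ∪ {+∞}, counted through the
sides containing both x and y but not v. -/
noncomputable def grom (_G : SimpleGraph V) (v : V) (x y : Set (Set V)) : ℕ∞ :=
  {h : Set V | h ∈ x ∧ h ∈ y ∧ v ∉ h}.encard

/-- The embedding ℕ ∪ {+∞} → ℤ ∪ {±∞}. -/
noncomputable def toE (n : ℕ∞) : EReal := ((n : ℝ≥0∞) : EReal)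

/-- The cross ratio cr_v(x,y,z,w) = (x·z)_v + (y·w)_v − (x·w)_v − (y·z)_v ∈ ℤ ∪ {±∞}. -/
noncomputable def crv (G : SimpleGraph V) (v : V) (x y z w : Set (Set V)) : EReal :=
  toE (grom G v x z) + toE (grom G v y w) - toE (grom G v x w) - toE (grom G v y z)

/-- The triple of sums of Gromov products attached to a 4-tuple. -/
noncomputable def tripod (G : SimpleGraph V) (v : V) (x y z w : Set (Set V)) :
    ℕ∞ × ℕ∞ × ℕ∞ :=
  (grom G v x y + grom G v z w, grom G v x z + grom G v y w, grom G v x w + grom G v y z)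

/-- (x,y,z,w) ∈ 𝒜 w.r.t. the basepoint v: at most one of the three sums is infinite. -/
def inA (G : SimpleGraph V) (v : V) (x y z w : Set (Set V)) : Prop :=
  ((tripod G v x y z w).1 ≠ ⊤ ∧ (tripod G v x y z w).2.1 ≠ ⊤) ∨
  ((tripod G v x y z w).1 ≠ ⊤ ∧ (tripod G v x y z w).2.2 ≠ ⊤) ∨
  ((tripod G v x y z w).2.1 ≠ ⊤ ∧ (tripod G v x y z w).2.2 ≠ ⊤)

/-- (x,y,z,w) ∈ 𝒜 (this is independent of the basepoint). -/
def memA (G : SimpleGraph V) (x y z w : Set (Set V)) : Prop :=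
  ∀ v : V, inA G v x y z w

/-- Two triples in (ℕ ∪ {+∞})³ are equivalent if they differ by adding a constant
n ∈ ℕ to all three entries. -/
def TripEquiv (p q : ℕ∞ × ℕ∞ × ℕ∞) : Prop :=
  (∃ n : ℕ, p.1 = q.1 + (n : ℕ∞) ∧ p.2.1 = q.2.1 + (n : ℕ∞) ∧ p.2.2 = q.2.2 + (n : ℕ∞)) ∨
  (∃ n : ℕ, q.1 = p.1 + (n : ℕ∞) ∧ q.2.1 = p.2.1 + (n : ℕ∞) ∧ q.2.2 = p.2.2 + (n : ℕ∞))

/-- crt(x,y,z,w) = ⟪a:b:c⟫ (the cross ratio triple is independent of the basepoint,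
so we require the equality of classes at every basepoint). -/
def crtEq (G : SimpleGraph V) (x y z w : Set (Set V)) (a b c : ℕ∞) : Prop :=
  ∀ v : V, TripEquiv (tripod G v x y z w) (a, b, c)

/-- The median of three points of X̄. -/
def med (x y z : Set (Set V)) : Set (Set V) := (x ∩ y) ∪ (y ∩ z) ∪ (z ∩ x)

/-- The interval I(x,y) ⊆ X̄ between two points of X̄. -/
def rInterval (G : SimpleGraph V) (x y : Set (Set V)) : Set (Set (Set V)) :=
  {σ : Set (Set V) | IsUltra G σ ∧ x ∩ y ⊆ σ}

/-- `Op G x y z` : x and y are opposite with respect to z, i.e. the median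
m = m(x,y,z) lies in X and I(x,y) = I(x,m) ∪ I(m,y). -/
def Op (G : SimpleGraph V) (x y z : Set (Set V)) : Prop :=
  (∃ p : V, med x y z = princ G p) ∧
  rInterval G x y = rInterval G x (med x y z) ∪ rInterval G (med x y z) y

/-- A geodesic ray (based at `r 0`). -/
def IsGeodRay (G : SimpleGraph V) (r : ℕ → V) : Prop :=
  (∀ n : ℕ, G.Adj (r n) (r (n + 1))) ∧
  ∀ m n : ℕ, m ≤ n → G.dist (r m) (r n) = n - m

/-- A bi-infinite geodesic line. -/
def IsGeodLine (G : SimpleGraph V) (L : ℤ → V) : Prop :=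
  (∀ n : ℤ, G.Adj (L n) (L (n + 1))) ∧
  ∀ m n : ℤ, m ≤ n → (G.dist (L m) (L n) : ℤ) = n - m

/-- The set 𝒲(r) of hyperplanes crossed by (the edges of) a ray. -/
def rayWalls (G : SimpleGraph V) (r : ℕ → V) : Set (Set (Set V)) :=
  {W : Set (Set V) | ∃ n : ℕ, W = wallOf G (r n) (r (n + 1))}

/-- A hyperplane is adjacent to `v` if it is dual to an edge incident to `v`. -/
def WallAdjTo (G : SimpleGraph V) (v : V) (W : Set (Set V)) : Prop :=
  ∃ u : V, G.Adj v u ∧ W = wallOf G v u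

/-- A straight ray: no two of the hyperplanes it crosses are transverse. -/
def RayStraight (G : SimpleGraph V) (r : ℕ → V) : Prop :=
  ∀ m n : ℕ, ¬ Transv (edgeHalf G (r m) (r (m + 1))) (edgeHalf G (r n) (r (n + 1)))

/-- A straight line: no two of the hyperplanes it crosses are transverse. -/
def LineStraight (G : SimpleGraph V) (L : ℤ → V) : Prop :=
  ∀ m n : ℤ, ¬ Transv (edgeHalf G (L m) (L (m + 1))) (edgeHalf G (L n) (L (n + 1)))

/-- The endpoint at infinity r⁺ ∈ ∂X of a ray: the ultrafilter of those halfspaces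
containing all but finitely many of its vertices. -/
def rayEnd (G : SimpleGraph V) (r : ℕ → V) : Set (Set V) :=
  {h : Set V | IsHalfspace G h ∧ ∃ N : ℕ, ∀ n : ℕ, N ≤ n → r n ∈ h}

/-- A straight point of the Roller boundary: the endpoint at infinity of a straight ray. -/
def IsStraightPt (G : SimpleGraph V) (x : Set (Set V)) : Prop :=
  ∃ r : ℕ → V, IsGeodRay G r ∧ RayStraight G r ∧ rayEnd G r = x

/-- x and y are the two endpoints at infinity of the line L. -/
def LineEnds (G : SimpleGraph V) (L : ℤ → V) (x y : Set (Set V)) : Prop :=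
  rayEnd G (fun n : ℕ => L (n : ℤ)) = x ∧ rayEnd G (fun n : ℕ => L (-(n : ℤ))) = y

/-- The edges from `v` to `a` and from `v` to `b` span a square. -/
def SpansSquare (G : SimpleGraph V) (v a b : V) : Prop :=
  ∃ w : V, w ≠ v ∧ G.Adj a w ∧ G.Adj b w

/-- An extremal vertex: some edge at `v` spans a square with every other edge at `v`. -/
def Extremal (G : SimpleGraph V) (v : V) : Prop :=
  ∃ a : V, G.Adj v a ∧ ∀ b : V, G.Adj v b → b ≠ a → SpansSquare G v a b

/-- The cube complex has no extremal vertices. -/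
def NoExtremal (G : SimpleGraph V) : Prop := ∀ v : V, ¬ Extremal G v

/-- A skinny vertex: exactly two incident edges. -/
def Skinny (G : SimpleGraph V) (v : V) : Prop := {u : V | G.Adj v u}.encard = 2

/-- A skinny ray: a geodesic ray whose initial vertex has at least three incident
edges and all of whose other vertices are skinny. -/
def IsSkinnyRay (G : SimpleGraph V) (r : ℕ → V) : Prop :=
  IsGeodRay G r ∧ 3 ≤ {u : V | G.Adj (r 0) u}.encard ∧ ∀ n : ℕ, 1 ≤ n → Skinny G (r n)

/-- (The vertex set of) a cube of the complex: a subset inducing a hypercube graph. -/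
def IsCube (G : SimpleGraph V) (c : Set V) : Prop :=
  ∃ (n : ℕ) (e : c ≃ (Fin n → Bool)),
    ∀ a b : c, G.Adj (a : V) (b : V) ↔ ∃! i : Fin n, e a i ≠ e b i

/-- A maximal cube. -/
def IsMaxCube (G : SimpleGraph V) (c : Set V) : Prop :=
  IsCube G c ∧ ∀ c' : Set V, IsCube G c' → c ⊆ c' → c' = c

/-- Completeness: there is no infinite ascending chain of cubes. -/
def CubeComplete (G : SimpleGraph V) : Prop :=
  ¬ ∃ c : ℕ → Set V, (∀ n : ℕ, IsCube G (c n)) ∧ ∀ n : ℕ, c n ⊂ c (n + 1)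

/-- No free faces: no non-maximal cube is contained in a unique maximal cube. -/
def NoFreeFaces (G : SimpleGraph V) : Prop :=
  ∀ c : Set V, IsCube G c → ¬ IsMaxCube G c → ¬ ∃! m : Set V, IsMaxCube G m ∧ c ⊆ m

/-- #𝒲(x, z | y, w): the number of hyperplanes separating x and z from y and w,
counted through the sides containing x and z. -/
noncomputable def sepCount (x z y w : Set (Set V)) : ℕ∞ :=
  {h : Set V | h ∈ x ∧ h ∈ z ∧ h ∉ y ∧ h ∉ w}.encard

/-- A Möbius map between Roller boundaries: it maps 𝒜(X) into 𝒜(Y) and preserves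
cross ratios. -/
def Mobius (G : SimpleGraph V) (G' : SimpleGraph V') (f : Bdry G → Bdry G') : Prop :=
  ∀ x y z w : Bdry G, memA G x.1 y.1 z.1 w.1 →
    memA G' (f x).1 (f y).1 (f z).1 (f w).1 ∧
    ∀ (v : V) (v' : V'),
      crv G' v' (f x).1 (f y).1 (f z).1 (f w).1 = crv G v x.1 y.1 z.1 w.1

/-- The induced action of a cubical isomorphism on X̄: an ultrafilter is mapped to
the set of images of its halfspaces. -/
def mapUltra (φ : V → V') (σ : Set (Set V)) : Set (Set V') :=
  (fun h : Set V => φ '' h) '' σ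

/-- The standard cubulation of ℝ: vertex set ℤ, edges between consecutive integers. -/
def zline : SimpleGraph ℤ := SimpleGraph.fromRel (fun m n => n = m + 1)

end CCCR
namespace CCCR

open SimpleGraph

variable {V : Type*} {G : SimpleGraph V}

/-! ### Basic distance and median facts -/

section Basics

lemma IsCCC.conn (hG : IsCCC G) : G.Connected := hG.1

lemma dist_adj (hG : IsCCC G) {u v : V} (h : G.Adj u v) : G.dist u v = 1 :=
  SimpleGraph.dist_eq_one_iff_adj.2 h

lemma dist_zero (hG : IsCCC G) {u v : V} (h : G.dist u v = 0) : u = v :=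
  (hG.conn.dist_eq_zero_iff).1 h

lemma tri (hG : IsCCC G) (u v w : V) : G.dist u w ≤ G.dist u v + G.dist v w :=
  hG.conn.dist_triangle

/-- no ties across an edge -/
lemma no_tie (hG : IsCCC G) {u v : V} (h : G.Adj u v) (w : V) :
    G.dist w u ≠ G.dist w v := by
  intro heq
  obtain ⟨m, ⟨m1, m2, m3⟩, hu⟩ := hG.2 u v w
  have hd : G.dist u v = 1 := dist_adj hG h
  rw [vInterval, Set.mem_setOf_eq, hd] at m1
  rw [vInterval, Set.mem_setOf_eq] at m2
  rw [vInterval, Set.mem_setOf_eq] at m3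
  have c1 : G.dist w u = G.dist u w := SimpleGraph.dist_comm
  have c2 : G.dist w v = G.dist v w := SimpleGraph.dist_comm
  rcases Nat.le_one_iff_eq_zero_or_eq_one.1 (Nat.le.intro m1 : G.dist u m ≤ 1) with h0 | h1
  · have hum : u = m := dist_zero hG h0
    rw [← hum] at m2
    have : G.dist v u = 1 := by rw [SimpleGraph.dist_comm]; exact hd
    omega
  · have h0 : G.dist m v = 0 := by omega
    have hmv : m = v := dist_zero hG h0
    rw [hmv] at m3
    have : G.dist v u = 1 := by rw [SimpleGraph.dist_comm]; exact hd
    omega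

lemma adj_dist_cases (hG : IsCCC G) {u v : V} (h : G.Adj u v) (w : V) :
    G.dist w v = G.dist w u + 1 ∨ G.dist w u = G.dist w v + 1 := by
  have h1 : G.dist w v ≤ G.dist w u + 1 := by
    have := tri hG w u v
    rw [dist_adj hG h] at this; omega
  have h2 : G.dist w u ≤ G.dist w v + 1 := by
    have := tri hG w v u
    rw [SimpleGraph.dist_comm (u := v) (v := u), dist_adj hG h] at this; omega
  have h3 := no_tie hG h w
  omega

/-- a neighbour of `v` on a geodesic towards `b` -/
lemma step_toward (hG : IsCCC G) {v b : V} {n : ℕ} (h : G.dist v b = n + 1) :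
    ∃ v1, G.Adj v v1 ∧ G.dist v1 b = n := by
  obtain ⟨p, hp⟩ := SimpleGraph.exists_walk_of_dist_ne_zero (by omega : G.dist v b ≠ 0)
  cases p with
  | nil => simp at hp h
  | @cons _ v1 _ hadj q =>
    refine ⟨v1, hadj, ?_⟩
    have hq : G.dist v1 b ≤ n := by
      have h2 := SimpleGraph.dist_le q
      simp only [SimpleGraph.Walk.length_cons] at hp
      omega
    have h3 := tri hG v v1 b
    rw [dist_adj hG hadj, h] at h3
    omega

end Basics

section Halfspaces

lemma mem_edgeHalf {u v w : V} : w ∈ edgeHalf G u v ↔ G.dist w v < G.dist w u := Iff.rfl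

lemma self_mem_edgeHalf (hG : IsCCC G) {u v : V} (h : G.Adj u v) : v ∈ edgeHalf G u v := by
  rw [mem_edgeHalf, SimpleGraph.dist_self, SimpleGraph.dist_comm, dist_adj hG h]; omega

lemma not_mem_edgeHalf (hG : IsCCC G) {u v : V} (h : G.Adj u v) : u ∉ edgeHalf G u v := by
  rw [mem_edgeHalf, SimpleGraph.dist_self, dist_adj hG h]; omega

lemma edgeHalf_isHalfspace {u v : V} (h : G.Adj u v) : IsHalfspace G (edgeHalf G u v) :=
  ⟨u, v, h, rfl⟩

lemma compl_edgeHalf (hG : IsCCC G) {u v : V} (h : G.Adj u v) :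
    (edgeHalf G u v)ᶜ = edgeHalf G v u := by
  ext w
  simp only [Set.mem_compl_iff, mem_edgeHalf, not_lt]
  have := adj_dist_cases hG h w
  constructor <;> intro <;> omega

lemma isHalfspace_compl (hG : IsCCC G) {h : Set V} (hh : IsHalfspace G h) :
    IsHalfspace G hᶜ := by
  obtain ⟨u, v, huv, rfl⟩ := hh
  exact (compl_edgeHalf hG huv) ▸ edgeHalf_isHalfspace huv.symm

lemma halfspace_nonempty (hG : IsCCC G) {h : Set V} (hh : IsHalfspace G h) : h.Nonempty := by
  obtain ⟨u, v, huv, rfl⟩ := hh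
  exact ⟨v, self_mem_edgeHalf hG huv⟩

end Halfspaces

end CCCR
namespace CCCR

open SimpleGraph

variable {V : Type*} {G : SimpleGraph V}

section MedianGeometry

lemma dist_two (hG : IsCCC G) {v a b : V} (ha : G.Adj v a) (hb : G.Adj v b) (hab : a ≠ b) :
    G.dist a b = 2 := by
  have h1 : G.dist a b ≤ 2 := by
    have := tri hG a v b
    rw [SimpleGraph.dist_comm (u := a) (v := v), dist_adj hG ha, dist_adj hG hb] at this
    omega
  have h2 : G.dist a b ≠ 0 := fun h0 => hab (dist_zero hG h0)
  have h3 : G.dist a b ≠ 1 := by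
    intro h1'
    have hadj : G.Adj a b := SimpleGraph.dist_eq_one_iff_adj.1 h1'
    have := no_tie hG hadj v
    rw [dist_adj hG ha, dist_adj hG hb] at this
    exact this rfl
  omega

lemma square_aux (hG : IsCCC G) {u v u1 v1 : V} (auv : G.Adj u v) (avv1 : G.Adj v v1)
    (av1u1 : G.Adj v1 u1) (au1u : G.Adj u1 u) (huv1 : u ≠ v1) (hvu1 : v ≠ u1) (w : V)
    (hlt : G.dist w v < G.dist w u) : G.dist w v1 < G.dist w u1 := by
  have hk : G.dist w u = G.dist w v + 1 := by
    rcases adj_dist_cases hG auv w with h | h <;> omega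
  set k := G.dist w v with hkdef
  have hu1 : G.dist w u1 = k ∨ G.dist w u1 = k + 2 := by
    rcases adj_dist_cases hG au1u w with h | h <;> omega
  have hv1 : G.dist w v1 = k + 1 ∨ k = G.dist w v1 + 1 := by
    rcases adj_dist_cases hG avv1 w with h | h <;> omega
  have hvu1' : G.dist v u1 = 2 := dist_two hG auv au1u.symm hvu1
  rcases hu1 with hu1 | hu1
  swap
  · rcases adj_dist_cases hG av1u1 w with h | h <;> omega
  · rcases hv1 with hv1 | hv1
    swap
    · omega
    · exfalso
      have hk1 : 1 ≤ k := by
        by_contra hk0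
        have hwv : w = v := dist_zero hG (by omega : G.dist w v = 0)
        rw [hwv, hvu1'] at hu1
        omega
      obtain ⟨m, ⟨m1, m2, m3⟩, hmu⟩ := hG.2 w v u1
      rw [vInterval, Set.mem_setOf_eq] at m1 m2 m3
      rw [hvu1'] at m2
      have cwu1 : G.dist u1 w = k := by
        rw [SimpleGraph.dist_comm (u := u1) (v := w)]; exact hu1
      rw [cwu1] at m3
      have hmv : G.dist m v ≠ 0 := by
        intro h0
        have hmv' : m = v := dist_zero hG h0
        rw [hmv'] at m3
        have hA : G.dist u1 v = 2 := by
          rw [SimpleGraph.dist_comm (u := u1) (v := v)]; exact hvu1'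
        have hB : G.dist v w = k := by
          rw [SimpleGraph.dist_comm (u := v) (v := w)]
        omega
      have hmu1 : G.dist m u1 ≠ 0 := by
        intro h0
        have hmv' : m = u1 := dist_zero hG h0
        have hwmk : G.dist w m = k := by rw [hmv']; exact hu1
        omega
      have cvm : G.dist v m = G.dist m v := SimpleGraph.dist_comm
      have hvm1 : G.dist v m = 1 := by omega
      have hmu1' : G.dist m u1 = 1 := by omega
      have hwm : G.dist w m = k - 1 := by omega
      have amv : G.Adj m v := by
        rw [← SimpleGraph.dist_eq_one_iff_adj]; omega
      have amu1 : G.Adj m u1 := SimpleGraph.dist_eq_one_iff_adj.1 hmu1'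
      have hmu' : u ≠ m := by
        intro h; rw [← h] at hwm; omega
      have hmv1 : m ≠ v1 := by
        intro h; rw [h] at hwm; omega
      have dum : G.dist u m = 2 := dist_two hG auv.symm amv.symm hmu'
      have dmv1 : G.dist m v1 = 2 := dist_two hG amu1.symm av1u1.symm hmv1
      have dv1u : G.dist v1 u = 2 := dist_two hG avv1 auv.symm (Ne.symm huv1)
      have e1 : G.dist u v = 1 := dist_adj hG auv
      have e2 : G.dist v u = 1 := by rw [SimpleGraph.dist_comm]; exact e1
      have e3 : G.dist m v = 1 := by omega
      have e4 : G.dist v v1 = 1 := dist_adj hG avv1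
      have e5 : G.dist v1 v = 1 := by rw [SimpleGraph.dist_comm]; exact e4
      have e6 : G.dist u u1 = 1 := by
        rw [SimpleGraph.dist_comm]; exact dist_adj hG au1u
      have e7 : G.dist u1 u = 1 := dist_adj hG au1u
      have e8 : G.dist u1 m = 1 := by rw [SimpleGraph.dist_comm]; exact hmu1'
      have e9 : G.dist u1 v1 = 1 := by rw [SimpleGraph.dist_comm]; exact dist_adj hG av1u1
      have e10 : G.dist v1 u1 = 1 := dist_adj hG av1u1
      obtain ⟨m', ⟨n1, n2, n3⟩, hmedu⟩ := hG.2 u m v1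
      have hv_med : v = m' := by
        apply hmedu
        refine ⟨?_, ?_, ?_⟩ <;> simp only [vInterval, Set.mem_setOf_eq] <;> omega
      have hu1_med : u1 = m' := by
        apply hmedu
        refine ⟨?_, ?_, ?_⟩ <;> simp only [vInterval, Set.mem_setOf_eq] <;> omega
      exact hvu1 (hv_med.trans hu1_med.symm)

lemma square_wall_eq (hG : IsCCC G) {u v u1 v1 : V} (auv : G.Adj u v) (avv1 : G.Adj v v1)
    (av1u1 : G.Adj v1 u1) (au1u : G.Adj u1 u) (huv1 : u ≠ v1) (hvu1 : v ≠ u1) :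
    edgeHalf G u v = edgeHalf G u1 v1 := by
  ext w
  constructor
  · exact fun hw => square_aux hG auv avv1 av1u1 au1u huv1 hvu1 w hw
  · exact fun hw => square_aux hG av1u1.symm avv1.symm auv.symm au1u.symm
      (Ne.symm hvu1) (Ne.symm huv1) w hw

/-- The key lemma: a halfspace separating the endpoints of an edge is the halfspace
dual to that edge. -/
lemma halfspace_unique (hG : IsCCC G) {h : Set V} (hh : IsHalfspace G h) {u v : V}
    (adj : G.Adj u v) (hv : v ∈ h) (hu : u ∉ h) : h = edgeHalf G u v := by
  obtain ⟨a, b, hab, rfl⟩ := hh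
  change v ∈ edgeHalf G a b at hv
  change u ∉ edgeHalf G a b at hu
  show edgeHalf G a b = edgeHalf G u v
  suffices H : ∀ n : ℕ, ∀ u v : V, G.Adj u v → v ∈ edgeHalf G a b → u ∉ edgeHalf G a b →
      G.dist v b = n → edgeHalf G a b = edgeHalf G u v by
    exact H _ u v adj hv hu rfl
  intro n
  induction n using Nat.strong_induction_on with
  | _ n IH =>
    intro u v adj hv hu hn
    rw [mem_edgeHalf] at hv
    rw [mem_edgeHalf] at hu
    have hva : G.dist v a = n + 1 := by
      rcases adj_dist_cases hG hab v with h | h <;> omega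
    have hub' : G.dist u b = G.dist u a + 1 := by
      rcases adj_dist_cases hG hab u with h | h <;> omega
    have hub2 : G.dist u b ≤ 1 + n := by
      have := tri hG u v b
      rw [dist_adj hG adj] at this; omega
    have hua2 : n ≤ G.dist u a := by
      have := tri hG v u a
      rw [SimpleGraph.dist_comm (u := v) (v := u), dist_adj hG adj] at this
      omega
    have hua : G.dist u a = n := by omega
    have hub : G.dist u b = n + 1 := by omega
    match n, hn, hva, hua, hub, IH with
    | 0, hn, hva, hua, hub, IH =>
      have hvb : v = b := dist_zero hG hn
      have huaa : u = a := dist_zero hG hua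
      subst hvb; subst huaa; rfl
    | (m+1), hn, hva, hua, hub, IH =>
      obtain ⟨v1, avv1, hv1b⟩ := step_toward hG hn
      have hv1a : G.dist v1 a = m + 1 := by
        have t1 : G.dist v a ≤ 1 + G.dist v1 a := by
          have := tri hG v v1 a
          rw [dist_adj hG avv1] at this; omega
        have t2 : G.dist v1 a ≤ m + 1 := by
          have := tri hG v1 b a
          rw [SimpleGraph.dist_comm (u := b) (v := a), dist_adj hG hab] at this
          omega
        omega
      have huv1 : u ≠ v1 := by
        intro h; subst h; omega
      have duv1 : G.dist u v1 = 2 := dist_two hG adj.symm avv1 huv1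
      obtain ⟨m', ⟨n1, n2, n3⟩, _⟩ := hG.2 u v1 a
      rw [vInterval, Set.mem_setOf_eq] at n1 n2 n3
      rw [duv1] at n1
      rw [hv1a] at n2
      have n3' : G.dist a m' + G.dist m' u = m + 1 := by
        rw [SimpleGraph.dist_comm (u := a) (v := u), hua] at n3; omega
      have hum' : G.dist u m' ≠ 0 := by
        intro h0
        have : u = m' := dist_zero hG h0
        rw [← this] at n2
        rw [SimpleGraph.dist_comm (u := v1) (v := u), duv1, hua] at n2
        omega
      have hm'v1 : G.dist m' v1 ≠ 0 := by
        intro h0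
        have : m' = v1 := dist_zero hG h0
        rw [this] at n3'
        rw [SimpleGraph.dist_comm (u := a) (v := v1), hv1a,
          SimpleGraph.dist_comm (u := v1) (v := u), duv1] at n3'
        omega
      have hum1 : G.dist u m' = 1 := by omega
      have hm'v11 : G.dist m' v1 = 1 := by omega
      have ham' : G.dist a m' = m := by
        rw [SimpleGraph.dist_comm (u := m') (v := u)] at n3'; omega
      have auu1 : G.Adj u m' := SimpleGraph.dist_eq_one_iff_adj.1 hum1
      have au1v1 : G.Adj m' v1 := SimpleGraph.dist_eq_one_iff_adj.1 hm'v11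
      have hu1b : G.dist m' b = m + 1 := by
        have hcases : G.dist m' b = m + 1 ∨ G.dist m' b + 1 = m := by
          have c1 : G.dist b v1 = G.dist v1 b := SimpleGraph.dist_comm
          have c2 : G.dist b m' = G.dist m' b := SimpleGraph.dist_comm
          rcases adj_dist_cases hG au1v1 b with h | h
          · right; omega
          · left; omega
        rcases hcases with h | h
        · exact h
        · exfalso
          have := tri hG u m' b
          rw [hum1, hub] at this; omega
      have hu1_notin : m' ∉ edgeHalf G a b := by
        rw [mem_edgeHalf, hu1b]
        rw [SimpleGraph.dist_comm (u := m') (v := a), ham']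
        omega
      have hv1_in : v1 ∈ edgeHalf G a b := by
        rw [mem_edgeHalf, hv1b, hv1a]; omega
      have heq1 : edgeHalf G a b = edgeHalf G m' v1 :=
        IH m (by omega) m' v1 au1v1 hv1_in hu1_notin hv1b
      have heq2 : edgeHalf G u v = edgeHalf G m' v1 := by
        have hvm'ne : v ≠ m' := by
          intro hEq
          rw [hEq] at hv
          have hma : G.dist m' a = m := by
            rw [SimpleGraph.dist_comm (u := m') (v := a)]; exact ham'
          omega
        exact square_wall_eq hG adj avv1 au1v1.symm auu1.symm huv1 hvm'ne
      rw [heq1, heq2]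

/-- Halfspaces are convex. -/
lemma halfspace_convex (hG : IsCCC G) {h : Set V} (hh : IsHalfspace G h) {x y z : V}
    (hx : x ∈ h) (hy : y ∈ h) (hz : G.dist x z + G.dist z y = G.dist x y) : z ∈ h := by
  suffices H : ∀ n : ℕ, ∀ x : V, x ∈ h → G.dist x z = n →
      G.dist x z + G.dist z y = G.dist x y → z ∈ h by
    exact H _ x hx rfl hz
  intro n
  induction n with
  | zero =>
    intro x hx hn _
    rwa [← dist_zero hG hn]
  | succ m IH =>
    intro x hx hn hgeo
    obtain ⟨x1, ax1, hx1z⟩ := step_toward hG hn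
    have hx1y : G.dist x1 z + G.dist z y = G.dist x1 y := by
      have t1 : G.dist x1 y ≤ m + G.dist z y := by
        have := tri hG x1 z y; omega
      have t2 : G.dist x y ≤ 1 + G.dist x1 y := by
        have := tri hG x x1 y
        rw [dist_adj hG ax1] at this; omega
      omega
    by_cases hx1 : x1 ∈ h
    · exact IH x1 hx1 hx1z hx1y
    · exfalso
      have hkey : h = edgeHalf G x1 x := halfspace_unique hG hh ax1.symm hx hx1
      rw [hkey, mem_edgeHalf] at hy
      rw [SimpleGraph.dist_comm (u := y) (v := x), SimpleGraph.dist_comm (u := y) (v := x1)] at hy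
      omega

end MedianGeometry

end CCCR
namespace CCCR

open SimpleGraph

variable {V : Type*} {G : SimpleGraph V}

section Squares

/-- Two transverse walls at a vertex span a square. -/
lemma square_of_crossing (hG : IsCCC G) {v a b : V} (hva : G.Adj v a) (hvb : G.Adj v b)
    (hab : a ≠ b) {x : V} (hxa : x ∈ edgeHalf G v a) (hxb : x ∈ edgeHalf G v b) :
    SpansSquare G v a b := by
  have dab : G.dist a b = 2 := dist_two hG hva hvb hab
  obtain ⟨m, ⟨m1, m2, m3⟩, _⟩ := hG.2 a b x
  rw [vInterval, Set.mem_setOf_eq] at m1 m2 m3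
  rw [dab] at m1
  have hma : G.dist a m ≠ 0 := by
    intro h0
    have ham : a = m := dist_zero hG h0
    rw [← ham] at m2
    have hlt1 : a ∈ edgeHalf G v b :=
      halfspace_convex hG (edgeHalf_isHalfspace hvb) (self_mem_edgeHalf hG hvb) hxb m2
    rw [mem_edgeHalf] at hlt1
    have hd1 : G.dist a v = 1 := by
      rw [SimpleGraph.dist_comm]; exact dist_adj hG hva
    omega
  have hmb : G.dist m b ≠ 0 := by
    intro h0
    have hbm : m = b := dist_zero hG h0
    rw [hbm] at m3
    have hlt1 : b ∈ edgeHalf G v a :=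
      halfspace_convex hG (edgeHalf_isHalfspace hva) hxa (self_mem_edgeHalf hG hva) m3
    rw [mem_edgeHalf] at hlt1
    have hd1 : G.dist b v = 1 := by
      rw [SimpleGraph.dist_comm]; exact dist_adj hG hvb
    have hc : G.dist b a = G.dist a b := SimpleGraph.dist_comm
    omega
  have ham1 : G.dist a m = 1 := by omega
  have hmb1 : G.dist m b = 1 := by omega
  have hmv : m ≠ v := by
    intro h0
    rw [h0] at m3
    have : v ∈ edgeHalf G v a :=
      halfspace_convex hG (edgeHalf_isHalfspace hva) hxa (self_mem_edgeHalf hG hva) m3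
    exact not_mem_edgeHalf hG hva this
  exact ⟨m, hmv, SimpleGraph.dist_eq_one_iff_adj.1 ham1,
    SimpleGraph.dist_eq_one_iff_adj.1 (by rw [SimpleGraph.dist_comm]; exact hmb1)⟩

end Squares

section MaxWall

/-- A maximal halfspace missing `w` is dual to an edge at `w`. -/
lemma max_wall_adj (hG : IsCCC G) {h : Set V} (hh : IsHalfspace G h) {w : V} (hw : w ∉ h)
    (hmax : ∀ g : Set V, IsHalfspace G g → h ⊆ g → g = h ∨ w ∈ g) :
    ∃ b, G.Adj w b ∧ h = edgeHalf G w b := by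
  have hne : h.Nonempty := halfspace_nonempty hG hh
  set S : Set ℕ := (fun x => G.dist w x) '' h with hS
  have hSne : S.Nonempty := hne.image _
  set k := sInf S with hk
  obtain ⟨b, hb, hwb⟩ : ∃ b ∈ h, G.dist w b = k := Nat.sInf_mem hSne
  have hmin : ∀ x ∈ h, k ≤ G.dist w x := fun x hx => Nat.sInf_le ⟨x, hx, rfl⟩
  have hk0 : k ≠ 0 := by
    intro h0
    rw [h0] at hwb
    exact hw ((dist_zero hG hwb) ▸ hb)
  obtain ⟨a, hba, haw⟩ : ∃ a, G.Adj b a ∧ G.dist a w = k - 1 := by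
    have : G.dist b w = (k - 1) + 1 := by
      rw [SimpleGraph.dist_comm]; omega
    exact step_toward hG this
  have hwa : G.dist w a = k - 1 := by rw [SimpleGraph.dist_comm]; exact haw
  have hanotin : a ∉ h := fun ha => by have := hmin a ha; omega
  have hhab : h = edgeHalf G a b := halfspace_unique hG hh hba.symm hb hanotin
  rcases Nat.lt_or_ge k 2 with hk1 | hk2
  · have hk1' : k = 1 := by omega
    have : a = w := dist_zero hG (by omega)
    subst this
    exact ⟨b, hba.symm, hhab⟩
  · exfalso
    obtain ⟨c, hac, hcw⟩ : ∃ c, G.Adj a c ∧ G.dist c w = k - 2 := by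
      have : G.dist a w = (k - 2) + 1 := by omega
      exact step_toward hG this
    have hwc : G.dist w c = k - 2 := by rw [SimpleGraph.dist_comm]; exact hcw
    have hcnotin : c ∉ h := fun hc => by have := hmin c hc; omega
    have hwg : w ∉ edgeHalf G c a := by
      rw [mem_edgeHalf, hwa, hwc]
      omega
    have hsub : h ⊆ edgeHalf G c a := by
      intro x hx
      rw [mem_edgeHalf]
      by_contra hnot
      have hxc : G.dist x c = G.dist x a - 1 ∧ 1 ≤ G.dist x a := by
        rcases adj_dist_cases hG hac.symm x with hca | hca
        · constructor <;> omega
        · omega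
      have hxb : G.dist x b = G.dist x a - 1 := by
        rw [hhab, mem_edgeHalf] at hx
        rcases adj_dist_cases hG hba x with hc | hc <;> omega
      have hcb : G.dist c b = 2 := by
        have : c ≠ b := by
          intro hcb'
          rw [hcb'] at hwc; omega
        exact dist_two hG hac hba.symm this
      obtain ⟨t, ⟨t1, t2, t3⟩, _⟩ := hG.2 x c b
      rw [vInterval, Set.mem_setOf_eq] at t1 t2 t3
      rw [hcb] at t2
      have htc : G.dist c t ≠ 0 := by
        intro h0
        have : c = t := dist_zero hG h0
        rw [← this] at t3
        exact hcnotin (halfspace_convex hG hh hb hx t3)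
      have htb : G.dist t b ≠ 0 := by
        intro h0
        have : t = b := dist_zero hG h0
        rw [this] at t1
        have hcc : G.dist b c = G.dist c b := SimpleGraph.dist_comm
        omega
      have htc1 : G.dist c t = 1 := by omega
      have htb1 : G.dist t b = 1 := by omega
      have hxt : G.dist x t = G.dist x c - 1 := by
        have : G.dist t c = G.dist c t := SimpleGraph.dist_comm
        omega
      have htmem : t ∈ h := by
        by_contra htnot
        have hadj : G.Adj t b := SimpleGraph.dist_eq_one_iff_adj.1 htb1
        have : h = edgeHalf G t b := halfspace_unique hG hh hadj hb htnot
        rw [this, mem_edgeHalf] at hx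
        omega
      have hm1 := hmin t htmem
      have hm2 : G.dist w t ≤ G.dist w c + G.dist c t := tri hG w c t
      omega
    have hgh : edgeHalf G c a ≠ h := by
      intro hEq
      have : a ∈ edgeHalf G c a := self_mem_edgeHalf hG hac.symm
      rw [hEq] at this
      exact hanotin this
    rcases hmax (edgeHalf G c a) (edgeHalf_isHalfspace hac.symm) hsub with hEq | hmem
    · exact hgh hEq
    · exact hwg hmem

end MaxWall

section SepFinite

lemma sep_finite_walk {p q : V} (hG : IsCCC G) (W : G.Walk p q) :
    {h : Set V | IsHalfspace G h ∧ q ∈ h ∧ p ∉ h}.Finite := by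
  induction W with
  | nil =>
    apply Set.Finite.subset (Set.finite_empty)
    rintro h ⟨_, hq, hp⟩
    exact absurd hq hp
  | @cons u u' q hadj W IH =>
    apply Set.Finite.subset (IH.insert (edgeHalf G u u'))
    rintro h ⟨hh, hq, hp⟩
    by_cases hu' : u' ∈ h
    · exact Set.mem_insert_iff.2 (Or.inl (halfspace_unique hG hh hadj hu' hp))
    · exact Set.mem_insert_iff.2 (Or.inr ⟨hh, hq, hu'⟩)

lemma sep_finite (hG : IsCCC G) (p q : V) :
    {h : Set V | IsHalfspace G h ∧ q ∈ h ∧ p ∉ h}.Finite := by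
  obtain ⟨W⟩ := hG.conn.preconnected p q
  exact sep_finite_walk hG W

end SepFinite

section UltraBasics

lemma ultra_halfspace {σ : Set (Set V)} (hσ : IsUltra G σ) {h : Set V} (hh : h ∈ σ) :
    IsHalfspace G h := hσ.1 h hh

lemma ultra_compl_not_mem {σ : Set (Set V)} (hσ : IsUltra G σ) {h : Set V}
    (hh : IsHalfspace G h) (hmem : h ∈ σ) : hᶜ ∉ σ := (hσ.2.1 h hh).1 hmem

lemma ultra_compl_mem {σ : Set (Set V)} (hσ : IsUltra G σ) {h : Set V}
    (hh : IsHalfspace G h) (hmem : h ∉ σ) : hᶜ ∈ σ := by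
  have := hσ.2.1 h hh
  tauto

lemma princ_ultra (hG : IsCCC G) (w : V) : IsUltra G (princ G w) := by
  refine ⟨fun h hh => hh.1, fun h hh => ?_, fun h hh k hk => ⟨w, hh.2, hk.2⟩⟩
  constructor
  · rintro ⟨_, hw⟩ ⟨_, hw'⟩
    exact hw' hw
  · intro hn
    refine ⟨hh, ?_⟩
    by_contra hwn
    exact hn ⟨isHalfspace_compl hG hh, hwn⟩

lemma mem_princ_iff {w : V} {h : Set V} : h ∈ princ G w ↔ IsHalfspace G h ∧ w ∈ h := Iff.rfl

lemma mem_med {x y z : Set (Set V)} {h : Set V} :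
    h ∈ med x y z ↔ (h ∈ x ∧ h ∈ y) ∨ (h ∈ y ∧ h ∈ z) ∨ (h ∈ z ∧ h ∈ x) := by
  simp [med, Set.mem_union, Set.mem_inter_iff, or_assoc]

lemma med_ultra {x y z : Set (Set V)} (hx : IsUltra G x) (hy : IsUltra G y)
    (hz : IsUltra G z) : IsUltra G (med x y z) := by
  refine ⟨?_, ?_, ?_⟩
  · intro h hh
    rw [mem_med] at hh
    rcases hh with ⟨h1, _⟩ | ⟨h1, _⟩ | ⟨h1, _⟩
    exacts [hx.1 h h1, hy.1 h h1, hz.1 h h1]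
  · intro h hh
    have dx := hx.2.1 h hh
    have dy := hy.2.1 h hh
    have dz := hz.2.1 h hh
    rw [mem_med, mem_med]
    tauto
  · intro h hh k hk
    rw [mem_med] at hh hk
    rcases hh with ⟨h1, h2⟩ | ⟨h1, h2⟩ | ⟨h1, h2⟩ <;>
      rcases hk with ⟨k1, k2⟩ | ⟨k1, k2⟩ | ⟨k1, k2⟩ <;>
      first
        | exact hx.2.2 h (by assumption) k (by assumption)
        | exact hy.2.2 h (by assumption) k (by assumption)
        | exact hz.2.2 h (by assumption) k (by assumption)

end UltraBasics

section FiniteDiff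

/-- An ultrafilter at finite distance from a vertex is principal. -/
lemma finite_diff_principal (hG : IsCCC G) {σ : Set (Set V)} (hσ : IsUltra G σ) {w : V}
    (hfin : {h ∈ σ | w ∉ h}.Finite) : ∃ u, σ = princ G u := by
  suffices H : ∀ n : ℕ, ∀ w : V, {h ∈ σ | w ∉ h}.Finite → {h ∈ σ | w ∉ h}.ncard = n →
      ∃ u, σ = princ G u by exact H _ w hfin rfl
  intro n
  induction n using Nat.strong_induction_on with
  | _ n IH =>
    intro w hfin hcard
    by_cases hD : {h ∈ σ | w ∉ h} = ∅
    · refine ⟨w, ?_⟩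
      ext h
      constructor
      · intro hh
        refine ⟨hσ.1 h hh, ?_⟩
        by_contra hwn
        have : h ∈ {h ∈ σ | w ∉ h} := ⟨hh, hwn⟩
        rw [hD] at this
        exact this
      · rintro ⟨hh, hwh⟩
        by_contra hn
        have hc : hᶜ ∈ σ := ultra_compl_mem hσ hh hn
        have : hᶜ ∈ {h ∈ σ | w ∉ h} := ⟨hc, fun hcc => hcc hwh⟩
        rw [hD] at this
        exact this
    · have hne : {h ∈ σ | w ∉ h}.Nonempty := Set.nonempty_iff_ne_empty.2 hD
      obtain ⟨h, hhD, hmax'⟩ := Set.Finite.exists_maximalFor id _ hfin hne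
      have hh : IsHalfspace G h := hσ.1 h hhD.1
      have hmax : ∀ g : Set V, IsHalfspace G g → h ⊆ g → g = h ∨ w ∈ g := by
        intro g hg hsub
        by_cases hgσ : g ∈ σ
        · by_cases hwg : w ∈ g
          · exact Or.inr hwg
          · exact Or.inl (Set.Subset.antisymm (hmax' ⟨hgσ, hwg⟩ hsub) hsub)
        · exfalso
          have hgc : gᶜ ∈ σ := ultra_compl_mem hσ hg hgσ
          obtain ⟨x, hx1, hx2⟩ := hσ.2.2 h hhD.1 gᶜ hgc
          exact hx2 (hsub hx1)
      obtain ⟨b, hwb, hEq⟩ := max_wall_adj hG hh hhD.2 hmax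
      have hbh : b ∈ h := hEq ▸ self_mem_edgeHalf hG hwb
      have hD' : {h' ∈ σ | b ∉ h'} = {h' ∈ σ | w ∉ h'} \ {h} := by
        ext h'
        simp only [Set.mem_setOf_eq, Set.mem_diff, Set.mem_singleton_iff]
        constructor
        · rintro ⟨hσ', hb'⟩
          have hw' : w ∉ h' := by
            intro hw'
            have : h' = edgeHalf G b w :=
              halfspace_unique hG (hσ.1 h' hσ') hwb.symm hw' hb'
            rw [← compl_edgeHalf hG hwb, ← hEq] at this
            rw [this] at hσ'
            exact ultra_compl_not_mem hσ hh hhD.1 hσ'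
          exact ⟨⟨hσ', hw'⟩, fun hEq' => hb' (hEq' ▸ hbh)⟩
        · rintro ⟨⟨hσ', hw'⟩, hne'⟩
          refine ⟨hσ', ?_⟩
          intro hb'
          exact hne' ((halfspace_unique hG (hσ.1 h' hσ') hwb hb' hw').trans hEq.symm)
      have hn1 : 1 ≤ n := by
        rw [← hcard]
        exact (Set.ncard_pos hfin).2 hne
      have hfin' : {h' ∈ σ | b ∉ h'}.Finite := hD' ▸ hfin.diff (t := {h})
      have hcard' : {h' ∈ σ | b ∉ h'}.ncard = n - 1 := by
        rw [hD', Set.ncard_diff_singleton_of_mem hhD, hcard]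
      exact IH (n - 1) (by omega) b hfin' hcard'

end FiniteDiff

end CCCR
namespace CCCR

open SimpleGraph

variable {V : Type*} {G : SimpleGraph V}

section TripEquivBasics

lemma tripEquiv_refl (p : ℕ∞ × ℕ∞ × ℕ∞) : TripEquiv p p :=
  Or.inl ⟨0, by simp⟩

lemma tripEquiv_symm {p q : ℕ∞ × ℕ∞ × ℕ∞} (h : TripEquiv p q) : TripEquiv q p := by
  rcases h with ⟨n, h⟩ | ⟨n, h⟩
  · exact Or.inr ⟨n, h⟩
  · exact Or.inl ⟨n, h⟩

private lemma enat_cancel_helper {a b : ℕ∞} {m n : ℕ} (hnm : n ≤ m)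
    (h : a + (m : ℕ∞) = b + (n : ℕ∞)) : b = a + ((m - n : ℕ) : ℕ∞) := by
  have hm : (m : ℕ∞) = ((m - n : ℕ) : ℕ∞) + (n : ℕ∞) := by
    rw [← Nat.cast_add]
    congr 1
    omega
  rw [hm, ← add_assoc] at h
  exact (WithTop.add_right_cancel (ENat.coe_ne_top n) h).symm

private lemma enat_stack {a : ℕ∞} {m n : ℕ} (hnm : n ≤ m) :
    a + (m : ℕ∞) = (a + (n : ℕ∞)) + ((m - n : ℕ) : ℕ∞) := by
  obtain ⟨k, rfl⟩ : ∃ k, m = n + k := ⟨m - n, by omega⟩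
  rw [Nat.add_sub_cancel_left]
  push_cast
  ring

lemma tripEquiv_trans {p q r : ℕ∞ × ℕ∞ × ℕ∞} (h1 : TripEquiv p q) (h2 : TripEquiv q r) :
    TripEquiv p r := by
  rcases h1 with ⟨m, a1, a2, a3⟩ | ⟨m, a1, a2, a3⟩ <;>
    rcases h2 with ⟨n, b1, b2, b3⟩ | ⟨n, b1, b2, b3⟩
  · refine Or.inl ⟨n + m, ?_, ?_, ?_⟩ <;>
      [rw [a1, b1]; rw [a2, b2]; rw [a3, b3]] <;> push_cast <;> ring
  · rcases le_total n m with hnm | hnm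
    · refine Or.inl ⟨m - n, ?_, ?_, ?_⟩ <;>
        [rw [a1, b1]; rw [a2, b2]; rw [a3, b3]] <;> exact enat_stack hnm
    · refine Or.inr ⟨n - m, ?_, ?_, ?_⟩ <;>
        [rw [b1, a1]; rw [b2, a2]; rw [b3, a3]] <;> exact enat_stack hnm
  · rcases le_total n m with hnm | hnm
    · exact Or.inr ⟨m - n, enat_cancel_helper hnm (a1.symm.trans b1),
        enat_cancel_helper hnm (a2.symm.trans b2), enat_cancel_helper hnm (a3.symm.trans b3)⟩
    · exact Or.inl ⟨n - m, enat_cancel_helper hnm (b1.symm.trans a1),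
        enat_cancel_helper hnm (b2.symm.trans a2), enat_cancel_helper hnm (b3.symm.trans a3)⟩
  · refine Or.inr ⟨m + n, ?_, ?_, ?_⟩ <;>
      [rw [b1, a1]; rw [b2, a2]; rw [b3, a3]] <;> push_cast <;> ring

end TripEquivBasics

end CCCR
namespace CCCR

open SimpleGraph

variable {V : Type*} {G : SimpleGraph V}

section GromDecomp

open Classical in
/-- Decomposition of the Gromov product at the two endpoints of an edge. -/
lemma grom_decomp (hG : IsCCC G) {α β : Set (Set V)} (hα : IsUltra G α) (hβ : IsUltra G β)
    {u v : V} (adj : G.Adj u v) :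
    ∃ C : ℕ∞,
      grom G u α β = C + ((if edgeHalf G u v ∈ α ∧ edgeHalf G u v ∈ β then 1 else 0 : ℕ) : ℕ∞) ∧
      grom G v α β = C + ((if (edgeHalf G u v)ᶜ ∈ α ∧ (edgeHalf G u v)ᶜ ∈ β then 1 else 0 : ℕ) : ℕ∞) := by
  classical
  set H := edgeHalf G u v with hHdef
  have hH : IsHalfspace G H := edgeHalf_isHalfspace adj
  have huH : u ∉ H := not_mem_edgeHalf hG adj
  have hvH : v ∈ H := self_mem_edgeHalf hG adj
  set S : Set (Set V) := {h | h ∈ α ∧ h ∈ β ∧ u ∉ h} with hSdef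
  set T : Set (Set V) := {h | h ∈ α ∧ h ∈ β ∧ v ∉ h} with hTdef
  have hgu : grom G u α β = S.encard := rfl
  have hgv : grom G v α β = T.encard := rfl
  have hcore : S \ {H, Hᶜ} = T \ {H, Hᶜ} := by
    ext h
    simp only [Set.mem_diff, Set.mem_insert_iff, Set.mem_singleton_iff, hSdef, hTdef,
      Set.mem_setOf_eq]
    constructor
    · rintro ⟨⟨h1, h2, h3⟩, h4⟩
      refine ⟨⟨h1, h2, ?_⟩, h4⟩
      intro hv
      exact h4 (Or.inl (halfspace_unique hG (hα.1 h h1) adj hv h3))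
    · rintro ⟨⟨h1, h2, h3⟩, h4⟩
      refine ⟨⟨h1, h2, ?_⟩, h4⟩
      intro hu
      have : h = edgeHalf G v u := halfspace_unique hG (hα.1 h h1) adj.symm hu h3
      rw [← compl_edgeHalf hG adj] at this
      exact h4 (Or.inr this)
  have hSsplit : (S \ {H, Hᶜ}).encard + (S ∩ {H, Hᶜ}).encard = S.encard :=
    Set.encard_diff_add_encard_inter S {H, Hᶜ}
  have hTsplit : (T \ {H, Hᶜ}).encard + (T ∩ {H, Hᶜ}).encard = T.encard :=
    Set.encard_diff_add_encard_inter T {H, Hᶜ}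
  have hSint : S ∩ {H, Hᶜ} = if H ∈ α ∧ H ∈ β then {H} else ∅ := by
    split_ifs with hc
    · ext h
      simp only [Set.mem_inter_iff, Set.mem_insert_iff, Set.mem_singleton_iff, hSdef,
        Set.mem_setOf_eq]
      constructor
      · rintro ⟨⟨h1, h2, h3⟩, hor | hor⟩
        · exact hor
        · exfalso; rw [hor] at h3; exact h3 (by simpa using huH)
      · rintro rfl
        exact ⟨⟨hc.1, hc.2, huH⟩, Or.inl rfl⟩
    · ext h
      simp only [Set.mem_inter_iff, Set.mem_insert_iff, Set.mem_singleton_iff, hSdef,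
        Set.mem_setOf_eq, Set.mem_empty_iff_false, iff_false]
      rintro ⟨⟨h1, h2, h3⟩, hor | hor⟩
      · rw [hor] at h1 h2; exact hc ⟨h1, h2⟩
      · rw [hor] at h3; exact h3 (by simpa using huH)
  have hTint : T ∩ {H, Hᶜ} = if Hᶜ ∈ α ∧ Hᶜ ∈ β then {Hᶜ} else ∅ := by
    split_ifs with hc
    · ext h
      simp only [Set.mem_inter_iff, Set.mem_insert_iff, Set.mem_singleton_iff, hTdef,
        Set.mem_setOf_eq]
      constructor
      · rintro ⟨⟨h1, h2, h3⟩, hor | hor⟩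
        · exfalso; rw [hor] at h3; exact h3 hvH
        · exact hor
      · rintro rfl
        exact ⟨⟨hc.1, hc.2, by simpa using hvH⟩, Or.inr rfl⟩
    · ext h
      simp only [Set.mem_inter_iff, Set.mem_insert_iff, Set.mem_singleton_iff, hTdef,
        Set.mem_setOf_eq, Set.mem_empty_iff_false, iff_false]
      rintro ⟨⟨h1, h2, h3⟩, hor | hor⟩
      · rw [hor] at h3; exact h3 hvH
      · rw [hor] at h1 h2; exact hc ⟨h1, h2⟩
  refine ⟨(S \ {H, Hᶜ}).encard, ?_, ?_⟩
  · rw [hgu, ← hSsplit, hSint]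
    congr 1
    split_ifs <;> simp
  · rw [hgv, ← hTsplit, hTint, ← hcore]
    congr 1
    split_ifs <;> simp

private lemma reshape (A B : ℕ∞) (m n : ℕ) :
    (A + (m : ℕ∞)) + (B + (n : ℕ∞)) = (A + B) + (((m + n : ℕ)) : ℕ∞) := by
  push_cast
  ring

private lemma tripEquiv_core (c1 c2 c3 : ℕ∞) {e1 e2 e3 f1 f2 f3 : ℕ}
    (h : (f1 ≤ e1 ∧ f2 ≤ e2 ∧ f3 ≤ e3 ∧ e1 - f1 = e2 - f2 ∧ e1 - f1 = e3 - f3) ∨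
         (e1 ≤ f1 ∧ e2 ≤ f2 ∧ e3 ≤ f3 ∧ f1 - e1 = f2 - e2 ∧ f1 - e1 = f3 - e3)) :
    TripEquiv (c1 + (e1 : ℕ∞), c2 + (e2 : ℕ∞), c3 + (e3 : ℕ∞))
      (c1 + (f1 : ℕ∞), c2 + (f2 : ℕ∞), c3 + (f3 : ℕ∞)) := by
  rcases h with ⟨g1, g2, g3, g4, g5⟩ | ⟨g1, g2, g3, g4, g5⟩
  · refine Or.inl ⟨e1 - f1, ?_, ?_, ?_⟩ <;> simp only []
    · exact enat_stack g1
    · rw [g4]; exact enat_stack g2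
    · rw [g5]; exact enat_stack g3
  · refine Or.inr ⟨f1 - e1, ?_, ?_, ?_⟩ <;> simp only []
    · exact enat_stack g1
    · rw [g4]; exact enat_stack g2
    · rw [g5]; exact enat_stack g3

open Classical in
lemma tripod_step (hG : IsCCC G) {x1 x2 y z : Set (Set V)} (hx1 : IsUltra G x1)
    (hx2 : IsUltra G x2) (hy : IsUltra G y) (hz : IsUltra G z) {u v : V} (adj : G.Adj u v) :
    TripEquiv (tripod G u x1 x2 y z) (tripod G v x1 x2 y z) := by
  classical
  set H := edgeHalf G u v with hHdef
  have hH : IsHalfspace G H := edgeHalf_isHalfspace adj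
  obtain ⟨C1, hC1u, hC1v⟩ := grom_decomp hG hx1 hx2 adj
  obtain ⟨C2, hC2u, hC2v⟩ := grom_decomp hG hy hz adj
  obtain ⟨C3, hC3u, hC3v⟩ := grom_decomp hG hx1 hy adj
  obtain ⟨C4, hC4u, hC4v⟩ := grom_decomp hG hx2 hz adj
  obtain ⟨C5, hC5u, hC5v⟩ := grom_decomp hG hx1 hz adj
  obtain ⟨C6, hC6u, hC6v⟩ := grom_decomp hG hx2 hy adj
  have cx1 : Hᶜ ∈ x1 ↔ H ∉ x1 := by have := hx1.2.1 H hH; tauto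
  have cx2 : Hᶜ ∈ x2 ↔ H ∉ x2 := by have := hx2.2.1 H hH; tauto
  have cy : Hᶜ ∈ y ↔ H ∉ y := by have := hy.2.1 H hH; tauto
  have cz : Hᶜ ∈ z ↔ H ∉ z := by have := hz.2.1 H hH; tauto
  show TripEquiv (grom G u x1 x2 + grom G u y z, grom G u x1 y + grom G u x2 z,
      grom G u x1 z + grom G u x2 y)
    (grom G v x1 x2 + grom G v y z, grom G v x1 y + grom G v x2 z,
      grom G v x1 z + grom G v x2 y)
  rw [hC1u, hC2u, hC3u, hC4u, hC5u, hC6u, hC1v, hC2v, hC3v, hC4v, hC5v, hC6v]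
  rw [reshape C1 C2, reshape C3 C4, reshape C5 C6, reshape C1 C2, reshape C3 C4, reshape C5 C6]
  apply tripEquiv_core
  by_cases t1 : H ∈ x1 <;> by_cases t2 : H ∈ x2 <;> by_cases t3 : H ∈ y <;>
    by_cases t4 : H ∈ z <;>
    simp only [← hHdef, cx1, cx2, cy, cz, t1, t2, t3, t4, if_pos, if_neg, not_true, not_false_iff,
      true_and, and_true, false_and, and_false, if_true, if_false] <;>
    omega

lemma tripod_basepoint (hG : IsCCC G) {x1 x2 y z : Set (Set V)} (hx1 : IsUltra G x1)
    (hx2 : IsUltra G x2) (hy : IsUltra G y) (hz : IsUltra G z) (u v : V) :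
    TripEquiv (tripod G u x1 x2 y z) (tripod G v x1 x2 y z) := by
  obtain ⟨W⟩ := hG.conn.preconnected u v
  induction W with
  | nil => exact tripEquiv_refl _
  | cons hadj W IH => exact tripEquiv_trans (tripod_step hG hx1 hx2 hy hz hadj) IH

end GromDecomp

end CCCR
namespace CCCR

open SimpleGraph

variable {V : Type*} {G : SimpleGraph V}

section MainPrep

lemma grom_zero {x y : Set (Set V)} {p : V} (h : ∀ g, g ∈ x → g ∈ y → p ∈ g) :
    grom G p x y = 0 := by
  apply Set.encard_eq_zero.2
  apply Set.eq_empty_iff_forall_notMem.2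
  rintro g ⟨g1, g2, g3⟩
  exact g3 (h g g1 g2)

lemma te_pos {t1 t2 t3 a b c : ℕ∞}
    (hte : TripEquiv ((t1, t2, t3) : ℕ∞ × ℕ∞ × ℕ∞) (a, b, c)) (hab : a < b) (hac : a < c) :
    t2 ≠ 0 ∧ t3 ≠ 0 := by
  rcases hte with ⟨n, h1, h2, h3⟩ | ⟨n, h1, h2, h3⟩
  · simp only [] at h1 h2 h3
    constructor
    · intro h0
      rw [h0] at h2
      have hb : b = 0 := by
        rcases add_eq_zero.1 h2.symm with ⟨hb, _⟩
        exact hb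
      rw [hb] at hab
      simp at hab
    · intro h0
      rw [h0] at h3
      have hc : c = 0 := (add_eq_zero.1 h3.symm).1
      rw [hc] at hac
      simp at hac
  · simp only [] at h1 h2 h3
    constructor
    · intro h0
      rw [h0, zero_add] at h2
      have : (n : ℕ∞) ≤ a := h1 ▸ le_add_self
      rw [h2] at hab
      exact absurd hab (not_lt.2 this)
    · intro h0
      rw [h0, zero_add] at h3
      have : (n : ℕ∞) ≤ a := h1 ▸ le_add_self
      rw [h3] at hac
      exact absurd hac (not_lt.2 this)

/-- Shared construction of the right-hand side witness. -/
lemma build_rhs (hG : IsCCC G) {x1 x2 y : Set (Set V)} (h1 : IsUltra G x1)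
    (h2 : IsUltra G x2) (hy : IsUltra G y) {p : V} (hmp : med x1 x2 y = princ G p)
    (z : Set (Set V)) (Z1 : IsUltra G z) (Z2 : ∀ u : V, z ≠ princ G u)
    (Z3 : ∀ g, g ∈ y → g ∈ z → p ∈ g)
    (Z4 : ∃ g, g ∈ x1 ∧ g ∈ z ∧ p ∉ g)
    (Z5 : {g : Set V | g ∈ x1 ∧ g ∈ z ∧ p ∉ g}.Finite)
    (Z6 : ∃ g, g ∈ x2 ∧ g ∈ z ∧ p ∉ g) :
    ∃ (z' : Set (Set V)) (a b c : ℕ∞), IsBdryPt G z' ∧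
      crtEq G x1 x2 y z' a b c ∧ a < min b c ∧ min b c < ⊤ := by
  have hmed : ∀ g, g ∈ med x1 x2 y → p ∈ g := by
    intro g hg
    rw [hmp] at hg
    exact hg.2
  have hz12 : grom G p x1 x2 = 0 :=
    grom_zero (fun g hga hgb => hmed g (mem_med.2 (Or.inl ⟨hga, hgb⟩)))
  have hz1y : grom G p x1 y = 0 :=
    grom_zero (fun g hga hgb => hmed g (mem_med.2 (Or.inr (Or.inr ⟨hgb, hga⟩))))
  have hz2y : grom G p x2 y = 0 :=
    grom_zero (fun g hga hgb => hmed g (mem_med.2 (Or.inr (Or.inl ⟨hga, hgb⟩))))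
  have hzyz : grom G p y z = 0 := grom_zero Z3
  have htp : tripod G p x1 x2 y z = (0, grom G p x2 z, grom G p x1 z) := by
    show (grom G p x1 x2 + grom G p y z, grom G p x1 y + grom G p x2 z,
      grom G p x1 z + grom G p x2 y) = _
    rw [hz12, hz1y, hz2y, hzyz, zero_add, zero_add, add_zero]
  refine ⟨z, 0, grom G p x2 z, grom G p x1 z, ⟨Z1, Z2⟩, ?_, ?_, ?_⟩
  · intro v
    exact tripEquiv_trans (tripod_basepoint hG h1 h2 hy Z1 v p) (htp ▸ tripEquiv_refl _)
  · rw [lt_min_iff]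
    constructor
    · rw [pos_iff_ne_zero]
      show {h : Set V | h ∈ x2 ∧ h ∈ z ∧ p ∉ h}.encard ≠ 0
      rw [Set.encard_ne_zero]
      obtain ⟨g, hg1, hg2, hg3⟩ := Z6
      exact ⟨g, hg1, hg2, hg3⟩
    · rw [pos_iff_ne_zero]
      show {h : Set V | h ∈ x1 ∧ h ∈ z ∧ p ∉ h}.encard ≠ 0
      rw [Set.encard_ne_zero]
      obtain ⟨g, hg1, hg2, hg3⟩ := Z4
      exact ⟨g, hg1, hg2, hg3⟩
  · rw [min_lt_iff]
    right
    show {h : Set V | h ∈ x1 ∧ h ∈ z ∧ p ∉ h}.encard < ⊤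
    exact Set.encard_lt_top_iff.2 Z5

end MainPrep

end CCCR
namespace CCCR

open SimpleGraph

variable {V : Type*} {G : SimpleGraph V}

section Ray

private lemma nat_first {Q : ℕ → Prop} (h0 : ¬ Q 0) {N : ℕ} (hN : Q N) :
    ∃ n, ¬ Q n ∧ Q (n + 1) := by
  induction N with
  | zero => exact absurd hN h0
  | succ N IH =>
    by_cases hQN : Q N
    · exact IH hQN
    · exact ⟨N, hQN, hN⟩

/-- Taking a square-free turn strictly decreases the wall. -/
lemma wall_step (hG : IsCCC G) {a v b : V} (hav : G.Adj a v) (hvb : G.Adj v b) (hba : b ≠ a)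
    (hnosq : ¬ SpansSquare G v a b) :
    edgeHalf G v b ⊆ edgeHalf G a v ∧ edgeHalf G v b ≠ edgeHalf G a v := by
  have hvH : v ∈ edgeHalf G a v := self_mem_edgeHalf hG hav
  have hvK : v ∉ edgeHalf G v b := not_mem_edgeHalf hG hvb
  have hbH : b ∈ edgeHalf G a v := by
    by_contra hbH
    have hEq : edgeHalf G a v = edgeHalf G b v :=
      halfspace_unique hG (edgeHalf_isHalfspace hav) hvb.symm hvH hbH
    have hEq2 : edgeHalf G v a = edgeHalf G v b := by
      rw [← compl_edgeHalf hG hav, ← compl_edgeHalf hG hvb.symm, hEq]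
    have ha : a ∈ edgeHalf G v a := self_mem_edgeHalf hG hav.symm
    rw [hEq2, mem_edgeHalf] at ha
    have : G.dist a v = 1 := dist_adj hG hav
    have : a = b := dist_zero hG (by omega)
    exact hba this.symm
  constructor
  · intro x hxK
    by_contra hxH
    have hxa : x ∈ edgeHalf G v a := by
      rw [← compl_edgeHalf hG hav]
      exact hxH
    exact hnosq (square_of_crossing hG hav.symm hvb hba.symm hxa hxK)
  · intro hEq
    rw [← hEq] at hvH
    exact hvK hvH

/-- From a vertex with a good starting edge, build a non-principal ultrafilter going
to infinity across walls avoiding `x1` and `y`. -/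
lemma ray_zpoint (hG : IsCCC G) (hnex : NoExtremal G) {x1 y : Set (Set V)}
    (hx1 : IsUltra G x1) (hy : IsUltra G y) {w b0 : V} (hwb0 : G.Adj w b0)
    (hb0x1 : edgeHalf G w b0 ∉ x1) (hb0y : edgeHalf G w b0 ∉ y) :
    ∃ Z : Set (Set V), IsUltra G Z ∧ (∀ u : V, Z ≠ princ G u) ∧
      (∀ g ∈ Z, w ∈ g ∨ (g ∉ x1 ∧ g ∉ y)) ∧
      (∀ g : Set V, IsHalfspace G g → w ∈ g → gᶜ ∈ y → g ∈ Z) := by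
  classical
  have hstep : ∀ v a : V, G.Adj v a → ∃ b, G.Adj v b ∧ b ≠ a ∧ ¬ SpansSquare G v a b := by
    intro v a hva
    by_contra hcon
    push_neg at hcon
    exact hnex v ⟨a, hva, hcon⟩
  let F : {pr : V × V // G.Adj pr.1 pr.2} → {pr : V × V // G.Adj pr.1 pr.2} := fun s =>
    ⟨(s.val.2, Classical.choose (hstep s.val.2 s.val.1 s.prop.symm)),
      (Classical.choose_spec (hstep s.val.2 s.val.1 s.prop.symm)).1⟩
  let sq : ℕ → {pr : V × V // G.Adj pr.1 pr.2} := fun n => F^[n] ⟨(w, b0), hwb0⟩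
  let r : ℕ → V := fun n => (sq n).val.1
  have hsq_succ : ∀ n, sq (n + 1) = F (sq n) := fun n => Function.iterate_succ_apply' F n _
  have hr1 : ∀ n, r (n + 1) = (sq n).val.2 := by
    intro n
    show (sq (n + 1)).val.1 = _
    rw [hsq_succ]
  have hadj : ∀ n, G.Adj (r n) (r (n + 1)) := by
    intro n
    rw [hr1]
    exact (sq n).prop
  have hspec : ∀ n, r (n + 2) ≠ r n ∧ ¬ SpansSquare G (r (n + 1)) (r n) (r (n + 2)) := by
    intro n
    have h2' := (Classical.choose_spec (hstep (sq n).val.2 (sq n).val.1 (sq n).prop.symm)).2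
    have e1 : r (n + 2) = Classical.choose (hstep (sq n).val.2 (sq n).val.1 (sq n).prop.symm) := by
      rw [hr1 (n + 1), hsq_succ]
    have e2 : r (n + 1) = (sq n).val.2 := hr1 n
    refine ⟨?_, ?_⟩
    · rw [e1]; exact h2'.1
    · rw [e1, e2]; exact h2'.2
  set h : ℕ → Set V := fun n => edgeHalf G (r n) (r (n + 1)) with hhdef
  have hstep2 : ∀ n, h (n + 1) ⊆ h n ∧ h (n + 1) ≠ h n := by
    intro n
    exact wall_step hG (hadj n) (hadj (n + 1)) (hspec n).1 (hspec n).2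
  have hchain : ∀ n k, h (n + k) ⊆ h n := by
    intro n k
    induction k with
    | zero => exact subset_rfl
    | succ k IH => exact subset_trans (hstep2 (n + k)).1 IH
  have hsub_lt : ∀ {n m}, n < m → h m ⊆ h n := by
    intro n m hnm
    obtain ⟨k, rfl⟩ : ∃ k, m = n + k := ⟨m - n, by omega⟩
    exact hchain n k
  have hmem_self : ∀ n, r (n + 1) ∈ h n := fun n => self_mem_edgeHalf hG (hadj n)
  have hnot_self : ∀ n, r n ∉ h n := fun n => not_mem_edgeHalf hG (hadj n)
  have hne_lt : ∀ {n m}, n < m → h m ≠ h n := by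
    intro n m hnm hEq
    have h1' : r (n + 1) ∈ h m := by rw [hEq]; exact hmem_self n
    have h2' : h m ⊆ h (n + 1) := by
      rcases Nat.lt_or_ge (n + 1) m with hlt | hge
      · exact hsub_lt hlt
      · have : m = n + 1 := by omega
        rw [this]
    exact hnot_self (n + 1) (h2' h1')
  have hinj : ∀ {n m}, h n = h m → n = m := by
    intro n m hEq
    rcases lt_trichotomy n m with hlt | heq | hgt
    · exact absurd hEq.symm (hne_lt hlt)
    · exact heq
    · exact absurd hEq (hne_lt hgt)
  have hrmem : ∀ {n m}, n < m → r m ∈ h n := by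
    intro n m hnm
    obtain ⟨k, rfl⟩ : ∃ k, m = (n + k) + 1 := ⟨m - n - 1, by omega⟩
    exact hchain n k (hmem_self (n + k))
  have hcross_in : ∀ (g : Set V), IsHalfspace G g → ∀ n, r n ∉ g → r (n + 1) ∈ g → g = h n :=
    fun g hg n h1 h2 => halfspace_unique hG hg (hadj n) h2 h1
  have hcross_out : ∀ (g : Set V), IsHalfspace G g → ∀ n, r n ∈ g → r (n + 1) ∉ g → gᶜ = h n :=
    fun g hg n h1 h2 =>
      halfspace_unique hG (isHalfspace_compl hG hg) (hadj n) h2 (fun hc => hc h1)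
  have hnoboth : ∀ n m, h n ≠ (h m)ᶜ := by
    intro n m hEq
    rcases lt_trichotomy n m with hlt | heq | hgt
    · have h1' : r (m + 1) ∈ h n := hrmem (by omega)
      rw [hEq] at h1'
      exact h1' (hmem_self m)
    · subst heq
      have h1' := hmem_self n
      have h2' : r (n + 1) ∈ (h n)ᶜ := by rw [← hEq]; exact h1'
      exact h2' h1'
    · have h1' := hmem_self n
      rw [hEq] at h1'
      exact h1' (hrmem (by omega))
  have hwallx : ∀ n, h n ∉ x1 ∧ h n ∉ y := by
    have e0 : h 0 = edgeHalf G w b0 := by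
      show edgeHalf G (r 0) (r 1) = _
      rw [hr1 0]
      rfl
    intro n
    cases n with
    | zero => rw [e0]; exact ⟨hb0x1, hb0y⟩
    | succ n =>
      have hsub0 : h (n + 1) ⊆ h 0 := hsub_lt (by omega)
      constructor
      · intro hmem
        have hc : (h 0)ᶜ ∈ x1 := ultra_compl_mem hx1 (edgeHalf_isHalfspace (hadj 0)) (by rw [e0] at *; exact hb0x1)
        obtain ⟨t, t1, t2⟩ := hx1.2.2 _ hmem _ hc
        exact t2 (hsub0 t1)
      · intro hmem
        have hc : (h 0)ᶜ ∈ y := ultra_compl_mem hy (edgeHalf_isHalfspace (hadj 0)) (by rw [e0] at *; exact hb0y)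
        obtain ⟨t, t1, t2⟩ := hy.2.2 _ hmem _ hc
        exact t2 (hsub0 t1)
  have hstab : ∀ g : Set V, IsHalfspace G g →
      ∃ N, (∀ n, N ≤ n → r n ∈ g) ∨ (∀ n, N ≤ n → r n ∉ g) := by
    intro g hg
    by_cases hc1 : ∃ n, g = h n
    · obtain ⟨n, hgn⟩ := hc1
      have claim : ∀ k, r (n + 1 + k) ∈ g := by
        intro k
        induction k with
        | zero => rw [hgn]; exact hmem_self n
        | succ k IH =>
          by_contra hout
          have hout' : gᶜ = h (n + 1 + k) := hcross_out g hg (n + 1 + k) IH hout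
          exact hnoboth (n + 1 + k) n (by rw [← hout', hgn])
      refine ⟨n + 1, Or.inl ?_⟩
      intro m hm
      obtain ⟨k, rfl⟩ : ∃ k, m = n + 1 + k := ⟨m - (n + 1), by omega⟩
      exact claim k
    · by_cases hc2 : ∃ n, gᶜ = h n
      · obtain ⟨n, hgn⟩ := hc2
        have claim : ∀ k, r (n + 1 + k) ∉ g := by
          intro k
          induction k with
          | zero =>
            have : r (n + 1) ∈ gᶜ := by rw [hgn]; exact hmem_self n
            exact this
          | succ k IH =>
            intro hin
            exact hc1 ⟨n + 1 + k, hcross_in g hg (n + 1 + k) IH hin⟩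
        refine ⟨n + 1, Or.inr ?_⟩
        intro m hm
        obtain ⟨k, rfl⟩ : ∃ k, m = n + 1 + k := ⟨m - (n + 1), by omega⟩
        exact claim k
      · have claim : ∀ n, r n ∈ g ↔ r 0 ∈ g := by
          intro n
          induction n with
          | zero => exact Iff.rfl
          | succ n IH =>
            rw [← IH]
            constructor
            · intro hin
              by_contra hnot
              exact hc1 ⟨n, hcross_in g hg n hnot hin⟩
            · intro hin
              by_contra hnot
              exact hc2 ⟨n, hcross_out g hg n hin hnot⟩
        by_cases hw0 : r 0 ∈ g
        · exact ⟨0, Or.inl (fun n _ => (claim n).2 hw0)⟩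
        · exact ⟨0, Or.inr (fun n _ hin => hw0 ((claim n).1 hin))⟩
  set Z : Set (Set V) := {g | IsHalfspace G g ∧ ∃ N, ∀ n, N ≤ n → r n ∈ g} with hZdef
  have hZultra : IsUltra G Z := by
    refine ⟨fun g hg => hg.1, ?_, ?_⟩
    · intro g hg
      constructor
      · rintro ⟨_, N, hN⟩ ⟨_, M, hM⟩
        exact hM (max N M) (le_max_right N M) (hN (max N M) (le_max_left N M))
      · intro hnot
        obtain ⟨N, hor | hor⟩ := hstab g hg
        · exact ⟨hg, N, hor⟩
        · exact absurd ⟨isHalfspace_compl hG hg, N, fun n hn => hor n hn⟩ hnot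
    · rintro g ⟨_, N, hN⟩ k ⟨_, M, hM⟩
      exact ⟨r (max N M), hN _ (le_max_left N M), hM _ (le_max_right N M)⟩
  have hZnp : ∀ u : V, Z ≠ princ G u := by
    intro u hZp
    have hhZ : ∀ n, h n ∈ Z :=
      fun n => ⟨edgeHalf_isHalfspace (hadj n), n + 1, fun m hm => hrmem (by omega)⟩
    have hsubSep : Set.range h ⊆ {g | IsHalfspace G g ∧ u ∈ g ∧ w ∉ g} := by
      rintro g ⟨n, rfl⟩
      refine ⟨edgeHalf_isHalfspace (hadj n), ?_, ?_⟩
      · have := hhZ n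
        rw [hZp] at this
        exact this.2
      · cases n with
        | zero => exact hnot_self 0
        | succ n => exact fun hw => hnot_self 0 (hsub_lt (show 0 < n + 1 by omega) hw)
    have hfin := (sep_finite hG w u).subset hsubSep
    have hinjf : Function.Injective h := fun a b hEq => hinj hEq
    exact Set.infinite_range_of_injective hinjf hfin
  refine ⟨Z, hZultra, hZnp, ?_, ?_⟩
  · intro g hgZ
    by_cases hw : w ∈ g
    · exact Or.inl hw
    · right
      obtain ⟨hg, N, hN⟩ := hgZ
      obtain ⟨n, hn1, hn2⟩ := nat_first (Q := fun n => r n ∈ g) hw (hN N le_rfl)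
      have : g = h n := hcross_in g hg n hn1 hn2
      rw [this]
      exact hwallx n
  · intro g hg hwg hgcy
    have claim : ∀ n, r n ∈ g := by
      intro n
      induction n with
      | zero => exact hwg
      | succ n IH =>
        by_contra hout
        have : gᶜ = h n := hcross_out g hg n IH hout
        rw [this] at hgcy
        exact (hwallx n).2 hgcy
    exact ⟨hg, 0, fun n _ => claim n⟩

end Ray

end CCCR

open CCCR
/-- Lemma `op vs lcrt`: for boundary points `x1, x2, y` with
`m(x1,x2,y) ∈ X`, the condition `x1 op_y x2` fails if and only if there is a
boundary point `z` with `crt(x1,x2,y,z) = ⟪a:b:c⟫` and `a < min{b,c} < +∞`. -/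
theorem stmt6 {V : Type*} (G : SimpleGraph V) (hG : IsCCC G) (hne : NoExtremal G)
    (x1 x2 y : Set (Set V)) (h1 : IsBdryPt G x1) (h2 : IsBdryPt G x2)
    (hy : IsBdryPt G y) (hm : ∃ p : V, med x1 x2 y = princ G p) :
    ¬ Op G x1 x2 y ↔
      ∃ (z : Set (Set V)) (a b c : ℕ∞), IsBdryPt G z ∧
        crtEq G x1 x2 y z a b c ∧ a < min b c ∧ min b c < ⊤ := by
  classical
  obtain ⟨p, hmp⟩ := hm
  have hu1 : IsUltra G x1 := h1.1
  have hu2 : IsUltra G x2 := h2.1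
  have huy : IsUltra G y := hy.1
  have hmed : ∀ g, g ∈ med x1 x2 y → p ∈ g := fun g hg => by rw [hmp] at hg; exact hg.2
  have hp12 : ∀ g, g ∈ x1 → g ∈ x2 → p ∈ g := fun g a b => hmed g (mem_med.2 (Or.inl ⟨a, b⟩))
  have hp1y : ∀ g, g ∈ x1 → g ∈ y → p ∈ g :=
    fun g a b => hmed g (mem_med.2 (Or.inr (Or.inr ⟨b, a⟩)))
  have hp2y : ∀ g, g ∈ x2 → g ∈ y → p ∈ g :=
    fun g a b => hmed g (mem_med.2 (Or.inr (Or.inl ⟨a, b⟩)))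
  constructor
  · -- forward direction
    intro hnop
    have hOp2 : rInterval G x1 x2 ≠
        rInterval G x1 (med x1 x2 y) ∪ rInterval G (med x1 x2 y) x2 := by
      intro hEq; exact hnop ⟨⟨p, hmp⟩, hEq⟩
    have hsubU : rInterval G x1 (med x1 x2 y) ∪ rInterval G (med x1 x2 y) x2 ⊆
        rInterval G x1 x2 := by
      rintro σ (⟨hσu, hσs⟩ | ⟨hσu, hσs⟩)
      · exact ⟨hσu, fun g hg => hσs ⟨hg.1, mem_med.2 (Or.inl ⟨hg.1, hg.2⟩)⟩⟩
      · exact ⟨hσu, fun g hg => hσs ⟨mem_med.2 (Or.inl ⟨hg.1, hg.2⟩), hg.2⟩⟩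
    have hnsub : ¬ rInterval G x1 x2 ⊆
        rInterval G x1 (med x1 x2 y) ∪ rInterval G (med x1 x2 y) x2 :=
      fun hs => hOp2 (Set.Subset.antisymm hs hsubU)
    obtain ⟨σ, hσI, hσnU⟩ := Set.not_subset.1 hnsub
    obtain ⟨hσu, hσ12⟩ := hσI
    have hσnA : ¬ (x1 ∩ med x1 x2 y ⊆ σ) := fun hs => hσnU (Or.inl ⟨hσu, hs⟩)
    have hσnB : ¬ (med x1 x2 y ∩ x2 ⊆ σ) := fun hs => hσnU (Or.inr ⟨hσu, hs⟩)
    obtain ⟨hA, hAmem, hAn⟩ := Set.not_subset.1 hσnA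
    obtain ⟨hB, hBmem, hBn⟩ := Set.not_subset.1 hσnB
    have hAx1 : hA ∈ x1 := hAmem.1
    have hBx2 : hB ∈ x2 := hBmem.2
    have hAy : hA ∈ y := by
      rcases mem_med.1 hAmem.2 with ⟨a1, a2⟩ | ⟨a1, a2⟩ | ⟨a1, a2⟩
      · exact absurd (hσ12 ⟨a1, a2⟩) hAn
      · exact absurd (hσ12 ⟨hAx1, a1⟩) hAn
      · exact a1
    have hBy : hB ∈ y := by
      rcases mem_med.1 hBmem.1 with ⟨a1, a2⟩ | ⟨a1, a2⟩ | ⟨a1, a2⟩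
      · exact absurd (hσ12 ⟨a1, a2⟩) hBn
      · exact a2
      · exact absurd (hσ12 ⟨a2, hBx2⟩) hBn
    have hApmem : p ∈ hA := hp1y hA hAx1 hAy
    have hBpmem : p ∈ hB := hp2y hB hBx2 hBy
    have hAhs : IsHalfspace G hA := hu1.1 hA hAx1
    have hBhs : IsHalfspace G hB := hu2.1 hB hBx2
    have hAcσ : hAᶜ ∈ σ := ultra_compl_mem hσu hAhs hAn
    have hBcσ : hBᶜ ∈ σ := ultra_compl_mem hσu hBhs hBn
    have hAnx2 : hA ∉ x2 := fun hh => hAn (hσ12 ⟨hAx1, hh⟩)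
    have hBnx1 : hB ∉ x1 := fun hh => hBn (hσ12 ⟨hh, hBx2⟩)
    have hAcx2 : hAᶜ ∈ x2 := ultra_compl_mem hu2 hAhs hAnx2
    have hBcx1 : hBᶜ ∈ x1 := ultra_compl_mem hu1 hBhs hBnx1
    have hApc : p ∉ hAᶜ := fun hc => hc hApmem
    have hBpc : p ∉ hBᶜ := fun hc => hc hBpmem
    obtain ⟨q, hqA, hqB⟩ := hσu.2.2 hAᶜ hAcσ hBᶜ hBcσ
    set μ := med (princ G q) x2 σ with hμdef
    have hμu : IsUltra G μ := med_ultra (princ_ultra hG q) hu2 hσu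
    by_cases hμp : ∃ u, μ = princ G u
    · -- μ is principal: use the ray construction
      obtain ⟨w, hμw⟩ := hμp
      have hYcond : ∀ g, g ∈ y → w ∈ g → p ∈ g := by
        intro g hgy hwg
        by_contra hp
        have hgx1 : g ∉ x1 := fun hh => hp (hp1y g hh hgy)
        have hgx2 : g ∉ x2 := fun hh => hp (hp2y g hh hgy)
        have hgμ : g ∈ μ := by rw [hμw]; exact ⟨huy.1 g hgy, hwg⟩
        rcases mem_med.1 hgμ with ⟨a1, a2⟩ | ⟨a1, a2⟩ | ⟨a1, a2⟩
        · exact hgx2 a2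
        · exact hgx2 a1
        · have hgc : gᶜ ∈ σ := hσ12 ⟨ultra_compl_mem hu1 (huy.1 g hgy) hgx1,
            ultra_compl_mem hu2 (huy.1 g hgy) hgx2⟩
          exact ultra_compl_not_mem hσu (huy.1 g hgy) a1 hgc
      have hwAc : w ∈ hAᶜ := by
        have hmem' : hAᶜ ∈ μ := mem_med.2 (Or.inr (Or.inl ⟨hAcx2, hAcσ⟩))
        rw [hμw] at hmem'; exact hmem'.2
      have hwBc : w ∈ hBᶜ := by
        have hmem' : hBᶜ ∈ μ :=
          mem_med.2 (Or.inr (Or.inr ⟨hBcσ, isHalfspace_compl hG hBhs, hqB⟩))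
        rw [hμw] at hmem'; exact hmem'.2
      have h12w : ∀ g, g ∈ x1 → g ∈ x2 → w ∈ g := by
        intro g ha hb
        have hmem' : g ∈ μ := mem_med.2 (Or.inr (Or.inl ⟨hb, hσ12 ⟨ha, hb⟩⟩))
        rw [hμw] at hmem'; exact hmem'.2
      obtain ⟨b0, hwb0, hb0x1, hb0y⟩ :
          ∃ b0, G.Adj w b0 ∧ edgeHalf G w b0 ∉ x1 ∧ edgeHalf G w b0 ∉ y := by
        by_contra hall
        obtain ⟨xh, hxh⟩ := halfspace_nonempty hG hAhs
        set S : Set (Set V) := {g | g ∈ x1 ∧ w ∉ g ∧ hA ⊆ g} with hSdef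
        have hSfin : S.Finite := by
          apply (sep_finite hG w xh).subset
          rintro g ⟨g1, g2, g3⟩
          exact ⟨hu1.1 g g1, g3 hxh, g2⟩
        have hSne : S.Nonempty := ⟨hA, hAx1, hwAc, subset_rfl⟩
        obtain ⟨hM, hMS, hMmax⟩ := Set.Finite.exists_maximalFor id S hSfin hSne
        obtain ⟨hMx1, hMw, hMA⟩ := hMS
        have hMhs : IsHalfspace G hM := hu1.1 hM hMx1
        have hmaxcond : ∀ g : Set V, IsHalfspace G g → hM ⊆ g → g = hM ∨ w ∈ g := by
          intro g hg hsubg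
          by_cases hgx1 : g ∈ x1
          · by_cases hwg : w ∈ g
            · exact Or.inr hwg
            · exact Or.inl (Set.Subset.antisymm (hMmax ⟨hgx1, hwg, hMA.trans hsubg⟩ hsubg) hsubg)
          · exfalso
            have hgc : gᶜ ∈ x1 := ultra_compl_mem hu1 hg hgx1
            obtain ⟨t, t1, t2⟩ := hu1.2.2 hM hMx1 gᶜ hgc
            exact t2 (hsubg t1)
        obtain ⟨bM, hwbM, hMEq⟩ := max_wall_adj hG hMhs hMw hmaxcond
        have hMnx2 : hM ∉ x2 := fun hh => hMw (h12w hM hMx1 hh)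
        have hMny : hM ∉ y := by
          intro hhy
          have hnex : ¬ Extremal G w := hne w
          have hstep' : ∃ b', G.Adj w b' ∧ b' ≠ bM ∧ ¬ SpansSquare G w bM b' := by
            by_contra hcon
            push_neg at hcon
            exact hnex ⟨bM, hwbM, hcon⟩
          obtain ⟨b', hwb', hb'ne, hnosq⟩ := hstep'
          have hdisj : ∀ t, t ∈ hM → t ∈ edgeHalf G w b' → False := by
            intro t t1 t2
            rw [hMEq] at t1
            exact hnosq (square_of_crossing hG hwbM hwb' hb'ne.symm t1 t2)
          by_cases hx1' : edgeHalf G w b' ∈ x1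
          · obtain ⟨t, t1, t2⟩ := hu1.2.2 hM hMx1 _ hx1'
            exact hdisj t t1 t2
          · have hy' : edgeHalf G w b' ∈ y := by
              by_contra hyn
              exact hall ⟨b', hwb', hx1', hyn⟩
            obtain ⟨t, t1, t2⟩ := huy.2.2 hM hhy _ hy'
            exact hdisj t t1 t2
        have hMcx2 : hMᶜ ∈ x2 := ultra_compl_mem hu2 hMhs hMnx2
        have hMcy : hMᶜ ∈ y := ultra_compl_mem huy hMhs hMny
        exact hp2y hMᶜ hMcx2 hMcy (hMA hApmem)
      obtain ⟨Z, hZu, hZnp, hZO1, hZO2⟩ := ray_zpoint hG hne hu1 huy hwb0 hb0x1 hb0y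
      apply build_rhs hG hu1 hu2 huy hmp Z hZu hZnp
      · intro g hgy hgZ
        rcases hZO1 g hgZ with hwg | ⟨_, hgny⟩
        · exact hYcond g hgy hwg
        · exact absurd hgy hgny
      · refine ⟨hBᶜ, hBcx1, ?_, hBpc⟩
        apply hZO2 hBᶜ (isHalfspace_compl hG hBhs) hwBc
        rw [compl_compl]
        exact hBy
      · apply (sep_finite hG p w).subset
        rintro g ⟨g1, g2, g3⟩
        rcases hZO1 g g2 with hwg | ⟨hgnx1, _⟩
        · exact ⟨hu1.1 g g1, hwg, g3⟩
        · exact absurd g1 hgnx1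
      · refine ⟨hAᶜ, hAcx2, ?_, hApc⟩
        apply hZO2 hAᶜ (isHalfspace_compl hG hAhs) hwAc
        rw [compl_compl]
        exact hAy
    · -- μ is not principal
      apply build_rhs hG hu1 hu2 huy hmp μ hμu (fun u hEq => hμp ⟨u, hEq⟩)
      · intro g hgy hgμ
        by_contra hp
        have hgx1 : g ∉ x1 := fun hh => hp (hp1y g hh hgy)
        have hgx2 : g ∉ x2 := fun hh => hp (hp2y g hh hgy)
        rcases mem_med.1 hgμ with ⟨a1, a2⟩ | ⟨a1, a2⟩ | ⟨a1, a2⟩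
        · exact hgx2 a2
        · exact hgx2 a1
        · have hgc : gᶜ ∈ σ := hσ12 ⟨ultra_compl_mem hu1 (huy.1 g hgy) hgx1,
            ultra_compl_mem hu2 (huy.1 g hgy) hgx2⟩
          exact ultra_compl_not_mem hσu (huy.1 g hgy) a1 hgc
      · exact ⟨hBᶜ, hBcx1,
          mem_med.2 (Or.inr (Or.inr ⟨hBcσ, isHalfspace_compl hG hBhs, hqB⟩)), hBpc⟩
      · apply (sep_finite hG p q).subset
        rintro g ⟨g1, g2, g3⟩
        refine ⟨hu1.1 g g1, ?_, g3⟩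
        have hgnx2 : g ∉ x2 := fun hh => g3 (hp12 g g1 hh)
        rcases mem_med.1 g2 with ⟨a1, a2⟩ | ⟨a1, a2⟩ | ⟨a1, a2⟩
        · exact absurd a2 hgnx2
        · exact absurd a1 hgnx2
        · exact a2.2
      · exact ⟨hAᶜ, hAcx2, mem_med.2 (Or.inr (Or.inl ⟨hAcx2, hAcσ⟩)), hApc⟩
  · -- backward direction
    rintro ⟨z, a, b, c, hzb, hcrt, hlt, _⟩ hOp
    have huz : IsUltra G z := hzb.1
    have hz12 : grom G p x1 x2 = 0 := grom_zero hp12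
    have hz1y : grom G p x1 y = 0 := grom_zero hp1y
    have hz2y : grom G p x2 y = 0 := grom_zero hp2y
    have htp : tripod G p x1 x2 y z = (grom G p y z, grom G p x2 z, grom G p x1 z) := by
      show (grom G p x1 x2 + grom G p y z, grom G p x1 y + grom G p x2 z,
        grom G p x1 z + grom G p x2 y) = _
      rw [hz12, hz1y, hz2y, zero_add, zero_add, add_zero]
    have hteP := hcrt p
    rw [htp] at hteP
    have hab : a < b := lt_of_lt_of_le hlt (min_le_left b c)
    have hac : a < c := lt_of_lt_of_le hlt (min_le_right b c)
    obtain ⟨ht2, ht3⟩ := te_pos hteP hab hac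
    have hne2 : {h : Set V | h ∈ x2 ∧ h ∈ z ∧ p ∉ h}.Nonempty :=
      Set.nonempty_of_encard_ne_zero ht2
    have hne1 : {h : Set V | h ∈ x1 ∧ h ∈ z ∧ p ∉ h}.Nonempty :=
      Set.nonempty_of_encard_ne_zero ht3
    obtain ⟨k2, hk2x2, hk2z, hk2p⟩ := hne2
    obtain ⟨k1, hk1x1, hk1z, hk1p⟩ := hne1
    have hσ0 : IsUltra G (med x1 x2 z) := med_ultra hu1 hu2 huz
    have hmem0 : med x1 x2 z ∈ rInterval G x1 x2 :=
      ⟨hσ0, fun g hg => mem_med.2 (Or.inl ⟨hg.1, hg.2⟩)⟩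
    rw [hOp.2] at hmem0
    have hk2hs : IsHalfspace G k2 := hu2.1 k2 hk2x2
    have hk1hs : IsHalfspace G k1 := hu1.1 k1 hk1x1
    have hk2nx1 : k2 ∉ x1 := fun hh => hk2p (hp12 k2 hh hk2x2)
    have hk2ny : k2 ∉ y := fun hh => hk2p (hp2y k2 hk2x2 hh)
    have hk1nx2 : k1 ∉ x2 := fun hh => hk1p (hp12 k1 hk1x1 hh)
    have hk1ny : k1 ∉ y := fun hh => hk1p (hp1y k1 hk1x1 hh)
    have hk2cx1 : k2ᶜ ∈ x1 := ultra_compl_mem hu1 hk2hs hk2nx1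
    have hk2cy : k2ᶜ ∈ y := ultra_compl_mem huy hk2hs hk2ny
    have hk1cx2 : k1ᶜ ∈ x2 := ultra_compl_mem hu2 hk1hs hk1nx2
    have hk1cy : k1ᶜ ∈ y := ultra_compl_mem huy hk1hs hk1ny
    have hk2cn : k2ᶜ ∉ med x1 x2 z := by
      intro hmem
      rcases mem_med.1 hmem with ⟨a1, a2⟩ | ⟨a1, a2⟩ | ⟨a1, a2⟩
      · exact ultra_compl_not_mem hu2 hk2hs hk2x2 a2
      · exact ultra_compl_not_mem hu2 hk2hs hk2x2 a1
      · exact ultra_compl_not_mem huz hk2hs hk2z a1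
    have hk1cn : k1ᶜ ∉ med x1 x2 z := by
      intro hmem
      rcases mem_med.1 hmem with ⟨a1, a2⟩ | ⟨a1, a2⟩ | ⟨a1, a2⟩
      · exact ultra_compl_not_mem hu1 hk1hs hk1x1 a1
      · exact ultra_compl_not_mem huz hk1hs hk1z a2
      · exact ultra_compl_not_mem hu1 hk1hs hk1x1 a2
    rcases hmem0 with ⟨_, hsA⟩ | ⟨_, hsB⟩
    · exact hk2cn (hsA ⟨hk2cx1, mem_med.2 (Or.inr (Or.inr ⟨hk2cy, hk2cx1⟩))⟩)
    · exact hk1cn (hsB ⟨mem_med.2 (Or.inr (Or.inl ⟨hk1cx2, hk1cy⟩)), hk1cx2⟩)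
end

section
/- Let X be a CAT(0) cube complex and let x1, x2, x, y1, y2, y ∈ ∂X satisfy x1 op_x x2 and y1 op_y y2. Set m_x := m(x1,x2,x) ∈ X and m_y := m(y1,y2,y) ∈ X. Then d(m_x, m_y) = (y1·y2)_{m_x} + |(y1·y)_{m_x} − (y2·y)_{m_x}|. -/
/-!
We use the standard combinatorial model of a CAT(0) cube complex: it is identified
with its vertex set endowed with the combinatorial (ℓ¹) metric, i.e. with a median
graph `G` on a vertex type `V`.  Halfspaces are realised as the vertex sets of the
two sides of the hyperplane dual to an edge, the Roller compactification `X̄` is the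
set of ultrafilters of halfspaces, vertices embedding via principal ultrafilters,
and the Roller boundary `∂X` consists of the non-principal ultrafilters.
-/

open scoped ENNReal
open Set

open CCCR

namespace CCCRProof

variable {V : Type*} {G : SimpleGraph V}

/-- The median hypothesis of a `IsCCC` graph. -/
def MedH (G : SimpleGraph V) : Prop :=
  ∀ x y z : V, ∃! m : V,
    m ∈ vInterval G x y ∧ m ∈ vInterval G y z ∧ m ∈ vInterval G z x

/-- Parity / local bipartiteness: distances to the two endpoints of an edge differ
by exactly one. -/
lemma parity (hc : G.Connected) (hm : MedH G) {u v : V} (huv : G.Adj u v) (s : V) :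
    G.dist s u = G.dist s v + 1 ∨ G.dist s v = G.dist s u + 1 := by
  obtain ⟨m, ⟨h1, h2, h3⟩, -⟩ := hm u v s
  simp only [vInterval, Set.mem_setOf_eq] at h1 h2 h3
  have hd : G.dist u v = 1 := SimpleGraph.dist_eq_one_iff_adj.mpr huv
  have h0 : G.dist u m = 0 ∨ G.dist m v = 0 := by omega
  rcases h0 with h0 | h0
  · have hmu : m = u := (hc.dist_eq_zero_iff.mp h0).symm
    subst hmu
    right
    have e1 : G.dist v m = 1 := by rw [SimpleGraph.dist_comm]; exact hd
    have e2 : G.dist m s = G.dist s m := SimpleGraph.dist_comm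
    have e3 : G.dist v s = G.dist s v := SimpleGraph.dist_comm
    omega
  · have hmv : m = v := hc.dist_eq_zero_iff.mp h0
    subst hmv
    left
    have e1 : G.dist m u = 1 := by rw [SimpleGraph.dist_comm]; exact hd
    omega

lemma mem_edgeHalf (hc : G.Connected) (hm : MedH G) {u v : V} (huv : G.Adj u v) (s : V) :
    s ∈ edgeHalf G u v ↔ G.dist s u = G.dist s v + 1 := by
  have := parity hc hm huv s
  simp only [edgeHalf, Set.mem_setOf_eq]
  omega

lemma compl_edgeHalf (hc : G.Connected) (hm : MedH G) {u v : V} (huv : G.Adj u v) :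
    (edgeHalf G u v)ᶜ = edgeHalf G v u := by
  ext s
  have := parity hc hm huv s
  simp only [edgeHalf, Set.mem_compl_iff, Set.mem_setOf_eq]
  omega

lemma isHalfspace_edgeHalf {u v : V} (huv : G.Adj u v) : IsHalfspace G (edgeHalf G u v) :=
  ⟨u, v, huv, rfl⟩

lemma isHalfspace_compl (hc : G.Connected) (hm : MedH G) {h : Set V}
    (hh : IsHalfspace G h) : IsHalfspace G hᶜ := by
  obtain ⟨u, v, huv, rfl⟩ := hh
  show IsHalfspace G (edgeHalf G u v)ᶜ
  rw [compl_edgeHalf hc hm huv]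
  exact ⟨v, u, huv.symm, rfl⟩

lemma no_triangle (hc : G.Connected) (hm : MedH G) {a b c : V}
    (h1 : G.Adj a b) (h2 : G.Adj b c) (h3 : G.Adj a c) : False := by
  have hp := parity hc hm h1 c
  have e1 : G.dist c a = 1 := SimpleGraph.dist_eq_one_iff_adj.mpr h3.symm
  have e2 : G.dist c b = 1 := SimpleGraph.dist_eq_one_iff_adj.mpr h2.symm
  omega

/-- No `K_{2,3}`: two distinct vertices cannot have three pairwise distinct,
pairwise non-adjacent common neighbours. -/
lemma k23 (hc : G.Connected) (hm : MedH G) {x y m1 m2 m3 : V} (hxy : x ≠ y)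
    (a1x : G.Adj m1 x) (a1y : G.Adj m1 y) (a2x : G.Adj m2 x) (a2y : G.Adj m2 y)
    (a3x : G.Adj m3 x) (a3y : G.Adj m3 y)
    (d12 : m1 ≠ m2) (d13 : m1 ≠ m3) (d23 : m2 ≠ m3)
    (n12 : ¬G.Adj m1 m2) (n13 : ¬G.Adj m1 m3) (n23 : ¬G.Adj m2 m3) : False := by
  have hd : ∀ {a b : V}, G.Adj a x → G.Adj b x → a ≠ b → ¬G.Adj a b → G.dist a b = 2 := by
    intro a b hax hbx hab hnadj
    have h2 : G.dist a b ≤ 2 := by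
      have ht := hc.dist_triangle (u := a) (v := x) (w := b)
      have e1 : G.dist a x = 1 := SimpleGraph.dist_eq_one_iff_adj.mpr hax
      have e2 : G.dist x b = 1 := SimpleGraph.dist_eq_one_iff_adj.mpr hbx.symm
      omega
    have h0 : G.dist a b ≠ 0 := fun h => hab (hc.dist_eq_zero_iff.mp h)
    have h1 : G.dist a b ≠ 1 := fun h => hnadj (SimpleGraph.dist_eq_one_iff_adj.mp h)
    omega
  have e12 := hd a1x a2x d12 n12
  have e13 := hd a1x a3x d13 n13
  have e23 := hd a2x a3x d23 n23
  obtain ⟨m, -, hu⟩ := hm m1 m2 m3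
  have hmem : ∀ z : V, G.Adj m1 z → G.Adj m2 z → G.Adj m3 z →
      (z ∈ vInterval G m1 m2 ∧ z ∈ vInterval G m2 m3 ∧ z ∈ vInterval G m3 m1) := by
    intro z h1 h2 h3
    have f1 : G.dist m1 z = 1 := SimpleGraph.dist_eq_one_iff_adj.mpr h1
    have f2 : G.dist m2 z = 1 := SimpleGraph.dist_eq_one_iff_adj.mpr h2
    have f3 : G.dist m3 z = 1 := SimpleGraph.dist_eq_one_iff_adj.mpr h3
    have g1 : G.dist z m2 = 1 := by rw [SimpleGraph.dist_comm]; exact f2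
    have g2 : G.dist z m3 = 1 := by rw [SimpleGraph.dist_comm]; exact f3
    have g3 : G.dist z m1 = 1 := by rw [SimpleGraph.dist_comm]; exact f1
    have e13' : G.dist m3 m1 = G.dist m1 m3 := SimpleGraph.dist_comm
    refine ⟨?_, ?_, ?_⟩ <;> simp only [vInterval, Set.mem_setOf_eq] <;> omega
  have hx' := hu x (hmem x a1x a2x a3x)
  have hy' := hu y (hmem y a1y a2y a3y)
  exact hxy (hx'.trans hy'.symm)

/-- One direction of the square lemma: opposite edges of a square define the same
halfspace. -/
lemma square_aux (hc : G.Connected) (hm : MedH G) {z1 z2 z1' w : V}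
    (e12 : G.Adj z1 z2) (e11' : G.Adj z1 z1') (e1'w : G.Adj z1' w) (ew2 : G.Adj w z2)
    (ne1 : z1 ≠ w) (ne2 : z1' ≠ z2) {s : V}
    (hlt : G.dist s z2 < G.dist s z1) : G.dist s w < G.dist s z1' := by
  by_contra hge
  have p12 := parity hc hm e12 s
  have p11' := parity hc hm e11' s
  have p1'w := parity hc hm e1'w s
  have pw2 := parity hc hm ew2 s
  have hb : G.dist s z1 = G.dist s z2 + 1 := by omega
  have hcw : G.dist s w = G.dist s z1' + 1 := by omega
  have he1 : G.dist s z1 = G.dist s z1' + 1 := by omega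
  have hcww : G.dist s w = G.dist s z1 := by omega
  have n2'1 : ¬ G.Adj z2 z1' := fun hadj => no_triangle hc hm e12 hadj e11'
  have hz21' : G.dist z2 z1' = 2 := by
    have hle2 : G.dist z2 z1' ≤ 2 := by
      have ht := hc.dist_triangle (u := z2) (v := z1) (w := z1')
      have e1 : G.dist z2 z1 = 1 := SimpleGraph.dist_eq_one_iff_adj.mpr e12.symm
      have e2 : G.dist z1 z1' = 1 := SimpleGraph.dist_eq_one_iff_adj.mpr e11'
      omega
    have h0 : G.dist z2 z1' ≠ 0 := fun h => ne2.symm (hc.dist_eq_zero_iff.mp h)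
    have h1 : G.dist z2 z1' ≠ 1 := fun h => n2'1 (SimpleGraph.dist_eq_one_iff_adj.mp h)
    omega
  obtain ⟨μ, ⟨i1, i2, i3⟩, -⟩ := hm s z2 z1'
  simp only [vInterval, Set.mem_setOf_eq] at i1 i2 i3
  have c1 : G.dist z2 μ = G.dist μ z2 := SimpleGraph.dist_comm
  have c2 : G.dist z1' μ = G.dist μ z1' := SimpleGraph.dist_comm
  have c3 : G.dist μ s = G.dist s μ := SimpleGraph.dist_comm
  have c4 : G.dist z1' s = G.dist s z1' := SimpleGraph.dist_comm
  have dμ2 : G.dist μ z2 = 1 := by omega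
  have dμ1' : G.dist μ z1' = 1 := by omega
  have dsμ : G.dist s μ + 1 = G.dist s z1' := by omega
  have aμ2 : G.Adj μ z2 := SimpleGraph.dist_eq_one_iff_adj.mp dμ2
  have aμ1' : G.Adj μ z1' := SimpleGraph.dist_eq_one_iff_adj.mp dμ1'
  have nμ1 : ¬ G.Adj z1 μ := fun hadj => no_triangle hc hm hadj aμ2 e12
  have nμw : ¬ G.Adj w μ := fun hadj => no_triangle hc hm hadj aμ2 ew2
  have n1w : ¬ G.Adj z1 w := fun hadj => no_triangle hc hm hadj ew2 e12
  have d1μ : z1 ≠ μ := by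
    intro hzz
    rw [← hzz] at dsμ
    omega
  have dwμ : w ≠ μ := by
    intro hzz
    rw [← hzz] at dsμ
    omega
  exact k23 hc hm ne2.symm e12 e11' ew2 e1'w.symm aμ2 aμ1' ne1 d1μ dwμ n1w nμ1 nμw

/-- The square lemma. -/
lemma square (hc : G.Connected) (hm : MedH G) {z1 z2 z1' w : V}
    (e12 : G.Adj z1 z2) (e11' : G.Adj z1 z1') (e1'w : G.Adj z1' w) (ew2 : G.Adj w z2)
    (ne1 : z1 ≠ w) (ne2 : z1' ≠ z2) (s : V) :
    G.dist s z2 < G.dist s z1 ↔ G.dist s w < G.dist s z1' :=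
  ⟨fun h => square_aux hc hm e12 e11' e1'w ew2 ne1 ne2 h,
   fun h => square_aux hc hm e1'w e11'.symm e12 ew2.symm ne2 ne1 h⟩

lemma getVert_dist_le (hc : G.Connected) {a b : V} (W : G.Walk a b) :
    ∀ (d i : ℕ), G.dist (W.getVert i) (W.getVert (i + d)) ≤ d := by
  intro d
  induction d with
  | zero => intro i; simp [SimpleGraph.dist_self]
  | succ d ihd =>
    intro i
    show G.dist (W.getVert i) (W.getVert (i + d + 1)) ≤ d + 1
    by_cases hi : i + d < W.length
    · have hadj := W.adj_getVert_succ hi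
      have h1 := ihd i
      have h2 : G.dist (W.getVert (i + d)) (W.getVert (i + d + 1)) = 1 :=
        SimpleGraph.dist_eq_one_iff_adj.mpr hadj
      have h3 : G.dist (W.getVert i) (W.getVert (i + d + 1)) ≤
          G.dist (W.getVert i) (W.getVert (i + d)) +
            G.dist (W.getVert (i + d)) (W.getVert (i + d + 1)) := hc.dist_triangle
      omega
    · push_neg at hi
      have h1 : W.getVert (i + d) = b := W.getVert_of_length_le hi
      have h2 : W.getVert (i + d + 1) = b := W.getVert_of_length_le (by omega)
      have h3 := ihd i
      rw [h1] at h3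
      rw [h2]
      omega

/-- Transfer of halfspaces along crossing edges (`Θ`-relation transitivity in median
graphs), by induction on the distance. -/
lemma theta (hc : G.Connected) (hm : MedH G) :
    ∀ (t : ℕ) {u v z1 z2 : V}, G.Adj u v → G.Adj z1 z2 →
      G.dist z1 u = t → G.dist z1 v = t + 1 → G.dist z2 u = t + 1 → G.dist z2 v = t →
      edgeHalf G z1 z2 = edgeHalf G u v := by
  intro t
  induction t with
  | zero =>
    intro u v z1 z2 huv hz d1u d1v d2u d2v
    obtain rfl : z1 = u := hc.dist_eq_zero_iff.mp d1u
    obtain rfl : z2 = v := hc.dist_eq_zero_iff.mp d2v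
    rfl
  | succ t ih =>
    intro u v z1 z2 huv hz d1u d1v d2u d2v
    obtain ⟨W, hW⟩ := hc.exists_walk_length_eq_dist z1 u
    have hlen : W.length = t + 1 := by rw [hW, d1u]
    have hpos : 0 < W.length := by omega
    have hadj1 : G.Adj z1 (W.getVert 1) := by
      have h := W.adj_getVert_succ (i := 0) hpos
      rwa [W.getVert_zero] at h
    set z1' := W.getVert 1 with hz1'
    have hd1'u_le : G.dist z1' u ≤ t := by
      have h1 := getVert_dist_le hc W t 1
      have h2 : W.getVert (1 + t) = u := W.getVert_of_length_le (by omega)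
      rwa [h2] at h1
    have hd11' : G.dist z1 z1' = 1 := SimpleGraph.dist_eq_one_iff_adj.mpr hadj1
    have htri1 : G.dist z1 u ≤ G.dist z1 z1' + G.dist z1' u := hc.dist_triangle
    have hd1'u : G.dist z1' u = t := by omega
    have hduv : G.dist u v = 1 := SimpleGraph.dist_eq_one_iff_adj.mpr huv
    have hd1'v : G.dist z1' v = t + 1 := by
      have h1 : G.dist z1' v ≤ G.dist z1' u + G.dist u v := hc.dist_triangle
      have h2 : G.dist z1 v ≤ G.dist z1 z1' + G.dist z1' v := hc.dist_triangle
      omega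
    have hne1'2 : z1' ≠ z2 := by
      intro hzz
      rw [hzz] at hd1'u
      omega
    have hnadj1'2 : ¬ G.Adj z1' z2 := fun hadj => no_triangle hc hm hadj1 hadj hz
    have hd1'2 : G.dist z1' z2 = 2 := by
      have h1 : G.dist z1' z2 ≤ G.dist z1' z1 + G.dist z1 z2 := hc.dist_triangle
      have h2 : G.dist z1' z1 = 1 := SimpleGraph.dist_eq_one_iff_adj.mpr hadj1.symm
      have h3 : G.dist z1 z2 = 1 := SimpleGraph.dist_eq_one_iff_adj.mpr hz
      have h0 : G.dist z1' z2 ≠ 0 := fun hh => hne1'2 (hc.dist_eq_zero_iff.mp hh)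
      have h4 : G.dist z1' z2 ≠ 1 := fun hh => hnadj1'2 (SimpleGraph.dist_eq_one_iff_adj.mp hh)
      omega
    obtain ⟨w, ⟨i1, i2, i3⟩, -⟩ := hm v z1' z2
    simp only [vInterval, Set.mem_setOf_eq] at i1 i2 i3
    have cc1 : G.dist v z1' = G.dist z1' v := SimpleGraph.dist_comm
    have cc2 : G.dist z2 z1' = G.dist z1' z2 := SimpleGraph.dist_comm
    have cc3 : G.dist z2 w = G.dist w z2 := SimpleGraph.dist_comm
    have cc4 : G.dist w z1' = G.dist z1' w := SimpleGraph.dist_comm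
    have cc5 : G.dist w v = G.dist v w := SimpleGraph.dist_comm
    have h0a : G.dist z1' w ≠ 0 := by
      intro hh
      have hww : z1' = w := hc.dist_eq_zero_iff.mp hh
      rw [← hww] at i3
      omega
    have h0b : G.dist w z2 ≠ 0 := by
      intro hh
      have hww : w = z2 := hc.dist_eq_zero_iff.mp hh
      rw [hww] at i1
      have cc6 : G.dist v z2 = G.dist z2 v := SimpleGraph.dist_comm
      have cc7 : G.dist z2 z1' = G.dist z1' z2 := SimpleGraph.dist_comm
      omega
    have hA : G.dist z1' w = 1 := by omega
    have hB : G.dist w z2 = 1 := by omega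
    have hC : G.dist w v = t := by omega
    have hadj1'w : G.Adj z1' w := SimpleGraph.dist_eq_one_iff_adj.mp hA
    have hadjwz2 : G.Adj w z2 := SimpleGraph.dist_eq_one_iff_adj.mp hB
    have hdwu : G.dist w u = t + 1 := by
      have h1 : G.dist w u ≤ G.dist w v + G.dist v u := hc.dist_triangle
      have h2 : G.dist z2 u ≤ G.dist z2 w + G.dist w u := hc.dist_triangle
      have h3 : G.dist v u = 1 := SimpleGraph.dist_eq_one_iff_adj.mpr huv.symm
      omega
    have hih := ih huv hadj1'w hd1'u hd1'v hdwu hC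
    have hne_z1w : z1 ≠ w := by
      intro hh
      rw [hh] at d1v
      have cc6 : G.dist w v = G.dist w v := rfl
      omega
    have hsq : edgeHalf G z1 z2 = edgeHalf G z1' w := by
      ext s
      have hiff := square hc hm hz hadj1 hadj1'w hadjwz2 hne_z1w hne1'2 s
      simpa only [edgeHalf, Set.mem_setOf_eq] using hiff
    rw [hsq, hih]

/-- Any edge crossing the wall of `(u,v)` defines the same halfspace. -/
lemma cross (hc : G.Connected) (hm : MedH G) {u v z1 z2 : V} (huv : G.Adj u v)
    (hz : G.Adj z1 z2) (h1 : z1 ∉ edgeHalf G u v) (h2 : z2 ∈ edgeHalf G u v) :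
    edgeHalf G z1 z2 = edgeHalf G u v := by
  rw [mem_edgeHalf hc hm huv] at h2
  have h1' : G.dist z1 v = G.dist z1 u + 1 := by
    have hp := parity hc hm huv z1
    simp only [edgeHalf, Set.mem_setOf_eq] at h1
    omega
  have t1 : G.dist z1 v ≤ G.dist z1 z2 + G.dist z2 v := hc.dist_triangle
  have t2 : G.dist z2 u ≤ G.dist z2 z1 + G.dist z1 u := hc.dist_triangle
  have hdz : G.dist z1 z2 = 1 := SimpleGraph.dist_eq_one_iff_adj.mpr hz
  have hdz' : G.dist z2 z1 = 1 := SimpleGraph.dist_eq_one_iff_adj.mpr hz.symm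
  have h2v : G.dist z2 v = G.dist z1 u := by omega
  exact theta hc hm (G.dist z1 u) huv hz rfl h1' (by omega) h2v

lemma exists_crossing (P : ℕ → Prop) :
    ∀ n : ℕ, ¬ P 0 → P n → ∃ i, i < n ∧ ¬ P i ∧ P (i + 1) := by
  intro n
  induction n with
  | zero => intro h0 hn; exact absurd hn h0
  | succ n ih =>
    intro h0 hn
    by_cases hPn : P n
    · obtain ⟨i, hi, hni, hsi⟩ := ih h0 hPn
      exact ⟨i, by omega, hni, hsi⟩
    · exact ⟨n, by omega, hPn, hn⟩

/-- The combinatorial distance equals the number of hyperplanes separating two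
vertices. -/
lemma dist_eq_encard (hc : G.Connected) (hm : MedH G) (p q : V) :
    {h : Set V | IsHalfspace G h ∧ q ∈ h ∧ p ∉ h}.encard = (G.dist p q : ℕ∞) := by
  obtain ⟨W, hW⟩ := hc.exists_walk_length_eq_dist p q
  set n := G.dist p q with hn
  have hw0 : W.getVert 0 = p := W.getVert_zero
  have hwn : W.getVert n = q := by rw [← hW]; exact W.getVert_length
  have hadj : ∀ i, i < n → G.Adj (W.getVert i) (W.getVert (i + 1)) := by
    intro i hi
    exact W.adj_getVert_succ (by rw [hW]; exact hi)
  have hle : ∀ i j, i ≤ j → G.dist (W.getVert i) (W.getVert j) ≤ j - i := by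
    intro i j hij
    have h1 := getVert_dist_le hc W (j - i) i
    rw [show i + (j - i) = j by omega] at h1
    exact h1
  have hkey : ∀ i j, i ≤ j → j ≤ n →
      G.dist p (W.getVert i) = i ∧ G.dist (W.getVert i) (W.getVert j) = j - i ∧
        G.dist (W.getVert j) q = n - j := by
    intro i j hij hjn
    have t1 := hle 0 i (by omega)
    rw [hw0] at t1
    have t2 := hle i j hij
    have t3 := hle j n hjn
    rw [hwn] at t3
    have tri1 : G.dist p q ≤ G.dist p (W.getVert i) + G.dist (W.getVert i) q :=
      hc.dist_triangle
    have tri2 : G.dist (W.getVert i) q ≤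
        G.dist (W.getVert i) (W.getVert j) + G.dist (W.getVert j) q := hc.dist_triangle
    omega
  have hinj2 : ∀ i j : ℕ, i < j → j < n →
      edgeHalf G (W.getVert i) (W.getVert (i + 1)) ≠
        edgeHalf G (W.getVert j) (W.getVert (j + 1)) := by
    intro i j hij hjn heq
    have hin : W.getVert j ∈ edgeHalf G (W.getVert i) (W.getVert (i + 1)) := by
      simp only [edgeHalf, Set.mem_setOf_eq]
      have k1 := (hkey (i + 1) j (by omega) (by omega)).2.1
      have k2 := (hkey i j (by omega) (by omega)).2.1
      have c1 : G.dist (W.getVert j) (W.getVert (i + 1)) =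
          G.dist (W.getVert (i + 1)) (W.getVert j) := SimpleGraph.dist_comm
      have c2 : G.dist (W.getVert j) (W.getVert i) =
          G.dist (W.getVert i) (W.getVert j) := SimpleGraph.dist_comm
      omega
    rw [heq] at hin
    simp only [edgeHalf, Set.mem_setOf_eq] at hin
    have hz : G.dist (W.getVert j) (W.getVert j) = 0 := SimpleGraph.dist_self
    omega
  have himg : {h : Set V | IsHalfspace G h ∧ q ∈ h ∧ p ∉ h} =
      (fun i : Fin n => edgeHalf G (W.getVert i) (W.getVert (i + 1))) '' Set.univ := by
    ext h
    simp only [Set.mem_setOf_eq, Set.image_univ, Set.mem_range]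
    constructor
    · rintro ⟨⟨u, v, huv, rfl⟩, hqh, hph⟩
      have hqh' : q ∈ edgeHalf G u v := hqh
      have hph' : p ∉ edgeHalf G u v := hph
      have hcr : ∃ i, i < n ∧ ¬ (W.getVert i ∈ edgeHalf G u v) ∧
          W.getVert (i + 1) ∈ edgeHalf G u v := by
        refine exists_crossing (fun i => W.getVert i ∈ edgeHalf G u v) n ?_ ?_
        · show W.getVert 0 ∉ edgeHalf G u v
          rw [hw0]; exact hph'
        · show W.getVert n ∈ edgeHalf G u v
          rw [hwn]; exact hqh'
      obtain ⟨i, hi, hni, hyi⟩ := hcr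
      exact ⟨⟨i, hi⟩, cross hc hm huv (hadj i hi) hni hyi⟩
    · rintro ⟨⟨i, hi⟩, rfl⟩
      refine ⟨⟨W.getVert i, W.getVert (i + 1), hadj i hi, rfl⟩, ?_, ?_⟩
      · show G.dist q (W.getVert (i + 1)) < G.dist q (W.getVert i)
        have k1 := (hkey (i + 1) n (by omega) (le_refl n)).2.1
        have k2 := (hkey i n (by omega) (le_refl n)).2.1
        rw [hwn] at k1 k2
        have c1 : G.dist q (W.getVert (i + 1)) = G.dist (W.getVert (i + 1)) q :=
          SimpleGraph.dist_comm
        have c2 : G.dist q (W.getVert i) = G.dist (W.getVert i) q := SimpleGraph.dist_comm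
        have c3 : G.dist (W.getVert (i+1)) q = G.dist q (W.getVert (i+1)) := SimpleGraph.dist_comm
        omega
      · show ¬ (G.dist p (W.getVert (i + 1)) < G.dist p (W.getVert i))
        have k1 := (hkey (i + 1) n (by omega) (le_refl n)).1
        have k2 := (hkey i n (by omega) (le_refl n)).1
        omega
  have hinj : Function.Injective
      (fun i : Fin n => edgeHalf G (W.getVert i) (W.getVert (i + 1))) := by
    intro i j hij
    by_contra hne
    have hne' : (i : ℕ) ≠ (j : ℕ) := fun hh => hne (Fin.ext hh)
    rcases Nat.lt_or_ge i j with hlt | hge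
    · exact hinj2 i j hlt j.2 hij
    · exact hinj2 j i (by omega) i.2 hij.symm
  rw [himg, hinj.encard_image, Set.encard_univ]
  simp [ENat.card_eq_coe_fintype_card]

/-- The key dichotomy coming from `y1 op_y y2`. -/
lemma dichotomy (hc : G.Connected) (hm : MedH G) {y1 y2 y : Set (Set V)}
    (hy1 : IsUltra G y1) (hy2 : IsUltra G y2)
    {q : V} (hq : med y1 y2 y = princ G q)
    (hop : rInterval G y1 y2 =
      rInterval G y1 (med y1 y2 y) ∪ rInterval G (med y1 y2 y) y2)
    (p : V) :
    {g : Set V | g ∈ y1 ∧ g ∈ y ∧ p ∉ g} ⊆ {g : Set V | g ∈ y2 ∧ g ∈ y ∧ p ∉ g} ∨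
    {g : Set V | g ∈ y2 ∧ g ∈ y ∧ p ∉ g} ⊆ {g : Set V | g ∈ y1 ∧ g ∈ y ∧ p ∉ g} := by
  by_contra hcon
  push_neg at hcon
  obtain ⟨h1sub, h2sub⟩ := hcon
  obtain ⟨h, hhB, hhC⟩ := Set.not_subset.mp h1sub
  obtain ⟨k, hkC, hkB⟩ := Set.not_subset.mp h2sub
  obtain ⟨hh1, hhy, hph⟩ := hhB
  obtain ⟨hk2, hky, hpk⟩ := hkC
  have hh2 : h ∉ y2 := fun hh => hhC ⟨hh, hhy, hph⟩
  have hk1 : k ∉ y1 := fun hh => hkB ⟨hh, hky, hpk⟩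
  have hHh : IsHalfspace G h := hy1.1 h hh1
  have hHk : IsHalfspace G k := hy2.1 k hk2
  have hhc2 : hᶜ ∈ y2 := by
    by_contra hcc
    exact hh2 ((hy2.2.1 h hHh).mpr hcc)
  have hkc1 : kᶜ ∈ y1 := by
    by_contra hcc
    exact hk1 ((hy1.2.1 k hHk).mpr hcc)
  have hmedh : h ∈ med y1 y2 y := by
    simp only [med, Set.mem_union, Set.mem_inter_iff]; tauto
  have hmedk : k ∈ med y1 y2 y := by
    simp only [med, Set.mem_union, Set.mem_inter_iff]; tauto
  have hqh : q ∈ h := by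
    have hh' := hmedh; rw [hq] at hh'; exact hh'.2
  have hqk : q ∈ k := by
    have hh' := hmedk; rw [hq] at hh'; exact hh'.2
  have hq12 : ∀ g, g ∈ y1 → g ∈ y2 → q ∈ g := by
    intro g hg1 hg2
    have hg : g ∈ med y1 y2 y := by
      simp only [med, Set.mem_union, Set.mem_inter_iff]; tauto
    rw [hq] at hg; exact hg.2
  have notboth1 : ∀ g, g ∈ y1 → gᶜ ∈ y1 → False := by
    intro g hg hgc
    have hne := hy1.2.2 g hg gᶜ hgc
    simp at hne
  have notboth2 : ∀ g, g ∈ y2 → gᶜ ∈ y2 → False := by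
    intro g hg hgc
    have hne := hy2.2.2 g hg gᶜ hgc
    simp at hne
  set σ : Set (Set V) := {g | (g ∈ y1 ∧ g ∈ y2) ∨
      (IsHalfspace G g ∧ ¬(g ∈ y1 ∧ g ∈ y2) ∧ ¬(gᶜ ∈ y1 ∧ gᶜ ∈ y2) ∧
        ((q ∈ g ∧ ¬ g ⊆ h ∧ ¬ g ⊆ k) ∨ (q ∉ g ∧ (gᶜ ⊆ h ∨ gᶜ ⊆ k))))} with hσdef
  have classify : ∀ g ∈ σ,
      (g ∈ y1 ∧ g ∈ y2) ∨ (q ∈ g ∧ ¬ g ⊆ h ∧ ¬ g ⊆ k) ∨ hᶜ ⊆ g ∨ kᶜ ⊆ g := by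
    intro g hg
    rw [hσdef, Set.mem_setOf_eq] at hg
    rcases hg with ⟨hg1, hg2⟩ | ⟨-, -, -, hcond⟩
    · exact Or.inl ⟨hg1, hg2⟩
    · rcases hcond with ⟨hqg, hs1, hs2⟩ | ⟨hqg, hs | hs⟩
      · exact Or.inr (Or.inl ⟨hqg, hs1, hs2⟩)
      · refine Or.inr (Or.inr (Or.inl ?_))
        intro x hx
        by_contra hxg
        exact hx (hs hxg)
      · refine Or.inr (Or.inr (Or.inr ?_))
        intro x hx
        by_contra hxg
        exact hx (hs hxg)
  have hσ_half : ∀ g ∈ σ, IsHalfspace G g := by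
    intro g hg
    rw [hσdef, Set.mem_setOf_eq] at hg
    rcases hg with ⟨hg1, -⟩ | ⟨hH, -⟩
    · exact hy1.1 g hg1
    · exact hH
  have hσ_iff : ∀ g : Set V, IsHalfspace G g → (g ∈ σ ↔ gᶜ ∉ σ) := by
    intro g hHg
    have hHgc : IsHalfspace G gᶜ := isHalfspace_compl hc hm hHg
    have hcc : gᶜᶜ = g := compl_compl g
    constructor
    · intro hgσ hgcσ
      rw [hσdef, Set.mem_setOf_eq] at hgσ hgcσ
      rw [hcc] at hgcσ
      rcases hgσ with ⟨a1, a2⟩ | ⟨-, b1, b2, b3⟩ <;>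
        rcases hgcσ with ⟨c1, c2⟩ | ⟨-, d1, d2, d3⟩
      · exact notboth1 g a1 c1
      · exact d2 ⟨a1, a2⟩
      · exact b2 ⟨c1, c2⟩
      · rcases b3 with ⟨e1, e2, e3⟩ | ⟨e1, e2⟩ <;>
          rcases d3 with ⟨f1, f2, f3⟩ | ⟨f1, f2⟩
        · exact f1 e1
        · rcases f2 with f2 | f2
          · exact e2 f2
          · exact e3 f2
        · rcases e2 with e2 | e2
          · exact f2 e2
          · exact f3 e2
        · exact f1 e1
    · intro hgcσ
      by_contra hgσ
      apply hgcσ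
      rw [hσdef, Set.mem_setOf_eq]
      rw [hσdef, Set.mem_setOf_eq] at hgσ
      by_cases t1 : gᶜ ∈ y1 ∧ gᶜ ∈ y2
      · exact Or.inl t1
      · have t2 : ¬(g ∈ y1 ∧ g ∈ y2) := fun hh => hgσ (Or.inl hh)
        by_cases hqg : q ∈ g
        · have hsub : g ⊆ h ∨ g ⊆ k := by
            by_contra hns
            push_neg at hns
            exact hgσ (Or.inr ⟨hHg, t2, t1, Or.inl ⟨hqg, hns.1, hns.2⟩⟩)
          refine Or.inr ⟨hHgc, t1, ?_, Or.inr ⟨fun hq' => hq' hqg, ?_⟩⟩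
          · rw [hcc]; exact t2
          · rw [hcc]; exact hsub
        · have hsub : ¬(gᶜ ⊆ h ∨ gᶜ ⊆ k) := by
            intro hs
            exact hgσ (Or.inr ⟨hHg, t2, t1, Or.inr ⟨hqg, hs⟩⟩)
          push_neg at hsub
          refine Or.inr ⟨hHgc, t1, ?_, Or.inl ⟨hqg, hsub.1, hsub.2⟩⟩
          rw [hcc]; exact t2
  have hσ_pair : ∀ g1 ∈ σ, ∀ g2 ∈ σ, (g1 ∩ g2).Nonempty := by
    intro g1 hg1σ g2 hg2σ
    rcases classify g1 hg1σ with ⟨a1, a2⟩ | ⟨aq, ah, ak⟩ | ha | ha <;>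
      rcases classify g2 hg2σ with ⟨b1, b2⟩ | ⟨bq, bh, bk⟩ | hb | hb
    · exact hy1.2.2 g1 a1 g2 b1
    · exact ⟨q, hq12 g1 a1 a2, bq⟩
    · obtain ⟨x, hx1, hx2⟩ := hy2.2.2 g1 a2 hᶜ hhc2
      exact ⟨x, hx1, hb hx2⟩
    · obtain ⟨x, hx1, hx2⟩ := hy1.2.2 g1 a1 kᶜ hkc1
      exact ⟨x, hx1, hb hx2⟩
    · exact ⟨q, aq, hq12 g2 b1 b2⟩
    · exact ⟨q, aq, bq⟩
    · obtain ⟨x, hxg, hxh⟩ := Set.not_subset.mp ah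
      exact ⟨x, hxg, hb hxh⟩
    · obtain ⟨x, hxg, hxh⟩ := Set.not_subset.mp ak
      exact ⟨x, hxg, hb hxh⟩
    · obtain ⟨x, hx1, hx2⟩ := hy2.2.2 g2 b2 hᶜ hhc2
      exact ⟨x, ha hx2, hx1⟩
    · obtain ⟨x, hxg, hxh⟩ := Set.not_subset.mp bh
      exact ⟨x, ha hxh, hxg⟩
    · exact ⟨p, ha hph, hb hph⟩
    · exact ⟨p, ha hph, hb hpk⟩
    · obtain ⟨x, hx1, hx2⟩ := hy1.2.2 g2 b1 kᶜ hkc1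
      exact ⟨x, ha hx2, hx1⟩
    · obtain ⟨x, hxg, hxh⟩ := Set.not_subset.mp bk
      exact ⟨x, ha hxh, hxg⟩
    · exact ⟨p, ha hpk, hb hph⟩
    · exact ⟨p, ha hpk, hb hpk⟩
  have hσ_ultra : IsUltra G σ := ⟨hσ_half, hσ_iff, hσ_pair⟩
  have hsub12 : y1 ∩ y2 ⊆ σ := by
    intro g hg
    rw [hσdef, Set.mem_setOf_eq]
    exact Or.inl ⟨hg.1, hg.2⟩
  have hσ_mem : σ ∈ rInterval G y1 y2 := ⟨hσ_ultra, hsub12⟩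
  have hhcσ : hᶜ ∈ σ := by
    rw [hσdef, Set.mem_setOf_eq]
    refine Or.inr ⟨isHalfspace_compl hc hm hHh, ?_, ?_, Or.inr ⟨fun hq' => hq' hqh, ?_⟩⟩
    · rintro ⟨c1, -⟩; exact notboth1 h hh1 c1
    · rw [compl_compl]; rintro ⟨-, c2⟩; exact hh2 c2
    · rw [compl_compl]; exact Or.inl (subset_refl h)
  have hkcσ : kᶜ ∈ σ := by
    rw [hσdef, Set.mem_setOf_eq]
    refine Or.inr ⟨isHalfspace_compl hc hm hHk, ?_, ?_, Or.inr ⟨fun hq' => hq' hqk, ?_⟩⟩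
    · rintro ⟨-, c2⟩; exact notboth2 k hk2 c2
    · rw [compl_compl]; rintro ⟨c1, -⟩; exact hk1 c1
    · rw [compl_compl]; exact Or.inr (subset_refl k)
  rw [hop] at hσ_mem
  rcases hσ_mem with hmem | hmem
  · have hhσ : h ∈ σ := hmem.2 ⟨hh1, hmedh⟩
    exact ((hσ_iff h hHh).mp hhσ) hhcσ
  · have hkσ : k ∈ σ := hmem.2 ⟨hmedk, hk2⟩
    exact ((hσ_iff k hHk).mp hkσ) hkcσ

lemma enat_sub_helper {n a b c : ℕ∞} (hb : b ≤ c) (hbt : b ≠ ⊤) (heq : n + b = a + c) :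
    n = a + (c - b) := by
  have h1 : a + (c - b) + b = a + c := by
    rw [add_assoc, tsub_add_cancel_of_le hb]
  apply WithTop.add_right_cancel hbt
  exact heq.trans h1.symm

end CCCRProof

/-- Proposition `d(mx,my)`: with `x1 op_x x2` and `y1 op_y y2`,
and medians the vertices `p = m(x1,x2,x)` and `q = m(y1,y2,y)`, one has
`d(p,q) = (y1·y2)_p + |(y1·y)_p − (y2·y)_p|`. -/
theorem stmt10 {V : Type*} (G : SimpleGraph V) (hG : IsCCC G)
    (x1 x2 x y1 y2 y : Set (Set V))
    (hx1 : IsBdryPt G x1) (hx2 : IsBdryPt G x2) (hx : IsBdryPt G x)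
    (hy1 : IsBdryPt G y1) (hy2 : IsBdryPt G y2) (hy : IsBdryPt G y)
    (hopx : Op G x1 x2 x) (hopy : Op G y1 y2 y)
    (p q : V) (hp : med x1 x2 x = princ G p) (hq : med y1 y2 y = princ G q) :
    (G.dist p q : ℕ∞) = grom G p y1 y2 +
      (max (grom G p y1 y) (grom G p y2 y) - min (grom G p y1 y) (grom G p y2 y)) := by
  obtain ⟨hc, hm⟩ := hG
  have hm' : CCCRProof.MedH G := hm
  have hy1U : IsUltra G y1 := hy1.1
  have hy2U : IsUltra G y2 := hy2.1
  have hS := CCCRProof.dist_eq_encard hc hm' p q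
  have hmedq : ∀ g ∈ med y1 y2 y, IsHalfspace G g ∧ q ∈ g := by
    intro g hg; rw [hq] at hg; exact hg
  have hdich := CCCRProof.dichotomy hc hm' hy1U hy2U hq hopy.2 p
  simp only [grom]
  set A : Set (Set V) := {g : Set V | g ∈ y1 ∧ g ∈ y2 ∧ p ∉ g} with hA
  set B : Set (Set V) := {g : Set V | g ∈ y1 ∧ g ∈ y ∧ p ∉ g} with hB
  set C : Set (Set V) := {g : Set V | g ∈ y2 ∧ g ∈ y ∧ p ∉ g} with hC
  set S : Set (Set V) := {h : Set V | IsHalfspace G h ∧ q ∈ h ∧ p ∉ h} with hSdef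
  have hAS : ∀ g ∈ A, g ∈ S := by
    intro g hg
    have hg' : g ∈ y1 ∧ g ∈ y2 ∧ p ∉ g := hg
    have hmed : g ∈ med y1 y2 y := by
      simp only [med, Set.mem_union, Set.mem_inter_iff]; tauto
    have hh := hmedq g hmed
    exact ⟨hh.1, hh.2, hg'.2.2⟩
  have hBS : ∀ g ∈ B, g ∈ S := by
    intro g hg
    have hg' : g ∈ y1 ∧ g ∈ y ∧ p ∉ g := hg
    have hmed : g ∈ med y1 y2 y := by
      simp only [med, Set.mem_union, Set.mem_inter_iff]; tauto
    have hh := hmedq g hmed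
    exact ⟨hh.1, hh.2, hg'.2.2⟩
  have hCS : ∀ g ∈ C, g ∈ S := by
    intro g hg
    have hg' : g ∈ y2 ∧ g ∈ y ∧ p ∉ g := hg
    have hmed : g ∈ med y1 y2 y := by
      simp only [med, Set.mem_union, Set.mem_inter_iff]; tauto
    have hh := hmedq g hmed
    exact ⟨hh.1, hh.2, hg'.2.2⟩
  have hSsplit : ∀ g ∈ S, g ∈ A ∨ g ∈ B ∨ g ∈ C := by
    intro g hg
    have hg' : IsHalfspace G g ∧ q ∈ g ∧ p ∉ g := hg
    have hmed : g ∈ med y1 y2 y := by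
      rw [hq]; exact ⟨hg'.1, hg'.2.1⟩
    simp only [med, Set.mem_union, Set.mem_inter_iff] at hmed
    rcases hmed with (⟨g1, g2⟩ | ⟨g2, gy⟩) | ⟨gy, g1⟩
    · exact Or.inl ⟨g1, g2, hg'.2.2⟩
    · exact Or.inr (Or.inr ⟨g2, gy, hg'.2.2⟩)
    · exact Or.inr (Or.inl ⟨g1, gy, hg'.2.2⟩)
  rcases hdich with hBC | hCB
  · -- B ⊆ C
    have hBC' : B ⊆ C := hBC
    have hmax : max B.encard C.encard = C.encard := max_eq_right (Set.encard_mono hBC')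
    have hmin : min B.encard C.encard = B.encard := min_eq_left (Set.encard_mono hBC')
    rw [hmax, hmin]
    have hunion : A ∪ C = S := by
      apply Set.Subset.antisymm
      · rintro g (hg | hg)
        · exact hAS g hg
        · exact hCS g hg
      · intro g hg
        rcases hSsplit g hg with hg' | hg' | hg'
        · exact Or.inl hg'
        · exact Or.inr (hBC' hg')
        · exact Or.inr hg'
    have hinter : A ∩ C = B := by
      apply Set.Subset.antisymm
      · rintro g ⟨hgA, hgC⟩
        have h1 : g ∈ y1 ∧ g ∈ y2 ∧ p ∉ g := hgA
        have h2 : g ∈ y2 ∧ g ∈ y ∧ p ∉ g := hgC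
        exact ⟨h1.1, h2.2.1, h1.2.2⟩
      · intro g hgB
        have h1 : g ∈ y1 ∧ g ∈ y ∧ p ∉ g := hgB
        have h2 : g ∈ y2 ∧ g ∈ y ∧ p ∉ g := hBC' hgB
        exact ⟨⟨h1.1, h2.1, h1.2.2⟩, h2⟩
    have hcardU := Set.encard_union_add_encard_inter A C
    rw [hunion, hinter, hS] at hcardU
    have hBfin : B.encard ≠ ⊤ := by
      have hle := Set.encard_mono (show B ⊆ S from hBS)
      rw [hS] at hle
      exact ne_top_of_le_ne_top (ENat.coe_ne_top _) hle
    exact CCCRProof.enat_sub_helper (Set.encard_mono hBC') hBfin hcardU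
  · -- C ⊆ B
    have hCB' : C ⊆ B := hCB
    have hmax : max B.encard C.encard = B.encard := max_eq_left (Set.encard_mono hCB')
    have hmin : min B.encard C.encard = C.encard := min_eq_right (Set.encard_mono hCB')
    rw [hmax, hmin]
    have hunion : A ∪ B = S := by
      apply Set.Subset.antisymm
      · rintro g (hg | hg)
        · exact hAS g hg
        · exact hBS g hg
      · intro g hg
        rcases hSsplit g hg with hg' | hg' | hg'
        · exact Or.inl hg'
        · exact Or.inr hg'
        · exact Or.inr (hCB' hg')
    have hinter : A ∩ B = C := by
      apply Set.Subset.antisymm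
      · rintro g ⟨hgA, hgB⟩
        have h1 : g ∈ y1 ∧ g ∈ y2 ∧ p ∉ g := hgA
        have h2 : g ∈ y1 ∧ g ∈ y ∧ p ∉ g := hgB
        exact ⟨h1.2.1, h2.2.1, h1.2.2⟩
      · intro g hgC
        have h1 : g ∈ y2 ∧ g ∈ y ∧ p ∉ g := hgC
        have h2 : g ∈ y1 ∧ g ∈ y ∧ p ∉ g := hCB' hgC
        exact ⟨⟨h2.1, h1.1, h1.2.2⟩, h2⟩
    have hcardU := Set.encard_union_add_encard_inter A B
    rw [hunion, hinter, hS] at hcardU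
    have hCfin : C.encard ≠ ⊤ := by
      have hle := Set.encard_mono (show C ⊆ S from hCS)
      rw [hS] at hle
      exact ne_top_of_le_ne_top (ENat.coe_ne_top _) hle
    exact CCCRProof.enat_sub_helper (Set.encard_mono hCB') hCfin hcardU
end

section
/- Let X be a CAT(0) cube complex, let x ∈ ∂ₛX be a straight boundary point, and let v ∈ X be a vertex. If y, z ∈ ∂ₛX are straight boundary points with (y·z)_v < +∞, then at least one of the Gromov products (x·y)_v, (x·z)_v is finite. -/
/-!
We use the standard combinatorial model of a CAT(0) cube complex: it is identified
with its vertex set endowed with the combinatorial (ℓ¹) metric, i.e. with a median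
graph `G` on a vertex type `V`.  Halfspaces are realised as the vertex sets of the
two sides of the hyperplane dual to an edge, the Roller compactification `X̄` is the
set of ultrafilters of halfspaces, vertices embedding via principal ultrafilters,
and the Roller boundary `∂X` consists of the non-principal ultrafilters.
-/

open scoped ENNReal
open Set

open CCCR

namespace CCCR
namespace Stmt14Aux

variable {G : SimpleGraph V}

lemma mem_edgeHalf {u v w : V} : w ∈ edgeHalf G u v ↔ G.dist w v < G.dist w u := Iff.rfl

/-- Dichotomy: no vertex is equidistant from the ends of an edge. -/
lemma fact1 (hG : IsCCC G) {u v : V} (huv : G.Adj u v) (w : V) :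
    G.dist w v < G.dist w u ∨ G.dist w u < G.dist w v := by
  obtain ⟨m, ⟨h1, h2, h3⟩, -⟩ := hG.2 u v w
  simp only [vInterval, Set.mem_setOf_eq] at h1 h2 h3
  have huv1 : G.dist u v = 1 := SimpleGraph.dist_eq_one_iff_adj.mpr huv
  have hcase : G.dist u m = 0 ∨ G.dist m v = 0 := by omega
  have dc : ∀ s t : V, G.dist s t = G.dist t s := fun s t => SimpleGraph.dist_comm
  rcases hcase with hc | hc
  · have he : u = m := (hG.1.dist_eq_zero_iff).mp hc
    rw [← he] at h2
    right
    have := dc v u; have := dc w u; have := dc w v; have := dc u w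
    omega
  · have he : m = v := (hG.1.dist_eq_zero_iff.mp hc)
    rw [he] at h3
    left
    have := dc v u; have := dc w v
    omega

/-- Djoković: a halfspace is determined by any dual edge. -/
lemma theta (hG : IsCCC G) : ∀ p : ℕ, ∀ u v a b : V, G.Adj u v → G.Adj a b →
    a ∉ edgeHalf G u v → b ∈ edgeHalf G u v → G.dist a u = p →
    edgeHalf G u v ⊆ edgeHalf G a b := by
  intro p
  induction p using Nat.strong_induction_on with
  | _ p IH =>
  intro u v a b huv hab ha hb hp
  have tri : ∀ s t r : V, G.dist s r ≤ G.dist s t + G.dist t r := fun _ t _ => hG.1.dist_triangle (v := t)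
  have dc : ∀ s t : V, G.dist s t = G.dist t s := fun s t => SimpleGraph.dist_comm
  have huv1 : G.dist u v = 1 := SimpleGraph.dist_eq_one_iff_adj.mpr huv
  have hab1 : G.dist a b = 1 := SimpleGraph.dist_eq_one_iff_adj.mpr hab
  simp only [mem_edgeHalf] at ha hb
  -- the square of distances
  have hav : G.dist a v = p + 1 := by
    have h1 := (fact1 hG huv a).resolve_left ha
    have h2 : G.dist a v ≤ G.dist a u + G.dist u v := tri _ u _
    omega
  have hbu : G.dist b u = G.dist b v + 1 := by
    have h2 : G.dist b u ≤ G.dist b v + G.dist v u := tri _ v _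
    have := dc v u
    omega
  have hbv : G.dist b v = p := by
    have h1 : G.dist a v ≤ G.dist a b + G.dist b v := tri _ b _
    have h2 : G.dist b u ≤ G.dist b a + G.dist a u := tri _ a _
    have := dc b a
    omega
  match p, hp with
  | 0, hp =>
    have hau : a = u := hG.1.dist_eq_zero_iff.mp hp
    have hbv' : b = v := hG.1.dist_eq_zero_iff.mp hbv
    subst hau; subst hbv'
    exact subset_rfl
  | 1, hp =>
    -- median-uniqueness argument
    intro w hw
    by_contra hcon
    simp only [mem_edgeHalf] at hw hcon
    have hwc := (fact1 hG hab w).resolve_left hcon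
    have h1 : G.dist w u ≤ G.dist w v + G.dist v u := tri _ v _
    have h2 : G.dist w b ≤ G.dist w a + G.dist a b := tri _ a _
    have h3 : G.dist w b ≤ G.dist w v + G.dist v b := tri _ v _
    have h4 : G.dist w u ≤ G.dist w a + G.dist a u := tri _ a _
    have h5 : G.dist w a ≤ G.dist w u + G.dist u a := tri _ u _
    have e1 := dc v u; have e2 := dc v b; have e3 := dc u a
    -- derive : dist w a = dist w u - 1, dist w b = dist w u, dist w v = dist w u -1
    have hwv : G.dist w v + 1 = G.dist w u := by omega
    have hwa : G.dist w a + 1 = G.dist w u := by omega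
    have hwb : G.dist w b = G.dist w u := by omega
    -- both v and a are medians of (w, u, b)
    obtain ⟨m, -, hm⟩ := hG.2 w u b
    have hub : G.dist u b = 2 := by rw [dc]; omega
    have hv : v = m := by
      apply hm
      refine ⟨?_, ?_, ?_⟩ <;> simp only [vInterval, Set.mem_setOf_eq]
      · omega
      · have := dc u v; have := dc b v; omega
      · have := dc b v; have := dc b w; have := dc v w; omega
    have ha' : a = m := by
      apply hm
      refine ⟨?_, ?_, ?_⟩ <;> simp only [vInterval, Set.mem_setOf_eq]
      · have := dc u a; omega
      · have := dc u a; have := dc b a; omega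
      · have := dc b a; have := dc b w; have := dc a w; omega
    have hva : v = a := hv.trans ha'.symm
    rw [← hva] at hav
    have h0 : G.dist v v = 0 := SimpleGraph.dist_self
    omega
  | (p' + 2), hp =>
    -- find a neighbour c of a closer to u
    obtain ⟨W, hW⟩ := (hG.1.preconnected a u).exists_walk_length_eq_dist
    match W, hW with
    | .nil, hW => simp at hW; omega
    | .cons (v := c) hac q, hW =>
      simp only [SimpleGraph.Walk.length_cons] at hW
      have hac1 : G.dist a c = 1 := SimpleGraph.dist_eq_one_iff_adj.mpr hac
      have hcu : G.dist c u = p' + 1 := by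
        have h1 : G.dist c u ≤ q.length := SimpleGraph.dist_le q
        have h2 : G.dist a u ≤ G.dist a c + G.dist c u := tri _ c _
        omega
      have hcv : G.dist c v = p' + 2 := by
        have h1 : G.dist a v ≤ G.dist a c + G.dist c v := tri _ c _
        have h2 : G.dist c v ≤ G.dist c u + G.dist u v := tri _ u _
        omega
      have hbc : G.dist b c = 2 := by
        have h1 : G.dist b c ≤ G.dist b a + G.dist a c := tri _ a _
        have h2 : G.dist b u ≤ G.dist b c + G.dist c u := tri _ c _
        have hne : G.dist b c ≠ 1 := by
          intro h
          have := SimpleGraph.dist_eq_one_iff_adj.mp h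
          omega
        have := dc b a
        omega
      -- the median e of (b, c, v) completes the square
      obtain ⟨e, ⟨f1, f2, f3⟩, -⟩ := hG.2 b c v
      simp only [vInterval, Set.mem_setOf_eq] at f1 f2 f3
      have g1 : G.dist e b = 1 ∧ G.dist e c = 1 ∧ G.dist e v = p' + 1 := by
        have := dc b e; have := dc c e; have := dc v e
        have := dc v b; have := dc c v
        omega
      obtain ⟨g1, g2, g3⟩ := g1
      have hce : G.Adj c e := SimpleGraph.dist_eq_one_iff_adj.mp (by rw [dc]; exact g2)
      have heu : p' + 2 ≤ G.dist e u := by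
        have h1 : G.dist b u ≤ G.dist b e + G.dist e u := tri _ e _
        have := dc b e
        omega
      have hc_not : c ∉ edgeHalf G u v := by
        simp only [mem_edgeHalf]; omega
      have he_mem : e ∈ edgeHalf G u v := by
        simp only [mem_edgeHalf]; omega
      have step1 : edgeHalf G u v ⊆ edgeHalf G c e :=
        IH (p' + 1) (by omega) u v c e huv hce hc_not he_mem hcu
      have ha_not : a ∉ edgeHalf G c e := by
        simp only [mem_edgeHalf]
        have h1 : G.dist a v ≤ G.dist a e + G.dist e v := tri _ e _
        omega
      have hb_mem : b ∈ edgeHalf G c e := by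
        simp only [mem_edgeHalf]
        have := dc b e; have := dc b c
        omega
      have step2 : edgeHalf G c e ⊆ edgeHalf G a b :=
        IH 1 (by omega) c e a b hce hab ha_not hb_mem hac1
      exact step1.trans step2

lemma theta_eq (hG : IsCCC G) {h : Set V} (hh : IsHalfspace G h) {a b : V}
    (hab : G.Adj a b) (ha : a ∉ h) (hb : b ∈ h) : h = edgeHalf G a b := by
  obtain ⟨u, v, huv, rfl⟩ := hh
  have h1 : edgeHalf G u v ⊆ edgeHalf G a b := theta hG (G.dist a u) u v a b huv hab ha hb rfl
  -- distances for the reverse application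
  have tri : ∀ s t r : V, G.dist s r ≤ G.dist s t + G.dist t r := fun _ t _ => hG.1.dist_triangle (v := t)
  have dc : ∀ s t : V, G.dist s t = G.dist t s := fun s t => SimpleGraph.dist_comm
  have huv1 : G.dist u v = 1 := SimpleGraph.dist_eq_one_iff_adj.mpr huv
  have hab1 : G.dist a b = 1 := SimpleGraph.dist_eq_one_iff_adj.mpr hab
  simp only [edgeHalf, Set.mem_setOf_eq] at ha hb
  have hav : G.dist a v = G.dist a u + 1 := by
    have h1 := (fact1 hG huv a).resolve_left ha
    have h2 : G.dist a v ≤ G.dist a u + G.dist u v := tri _ u _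
    omega
  have hbu : G.dist b u = G.dist b v + 1 := by
    have h2 : G.dist b u ≤ G.dist b v + G.dist v u := tri _ v _
    have := dc v u; omega
  have hbv : G.dist b v = G.dist a u := by
    have h1 : G.dist a v ≤ G.dist a b + G.dist b v := tri _ b _
    have h2 : G.dist b u ≤ G.dist b a + G.dist a u := tri _ a _
    have := dc b a; omega
  have hu_not : u ∉ edgeHalf G a b := by
    simp only [mem_edgeHalf]
    have := dc u b; have := dc u a; omega
  have hv_mem : v ∈ edgeHalf G a b := by
    simp only [mem_edgeHalf]
    have := dc v b; have := dc v a; omega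
  have h2 : edgeHalf G a b ⊆ edgeHalf G u v :=
    theta hG (G.dist u a) a b u v hab huv hu_not hv_mem rfl
  exact (subset_antisymm h1 h2)


lemma walk_cross {h : Set V} : ∀ {s t : V} (W : G.Walk s t), s ∉ h → t ∈ h →
    ∃ i < W.length, W.getVert i ∉ h ∧ W.getVert (i + 1) ∈ h := by
  intro s t W
  induction W with
  | nil => intro hs ht; exact absurd ht hs
  | @cons s c t hadj q IH =>
    intro hs ht
    by_cases hc : c ∈ h
    · refine ⟨0, by simp, ?_, ?_⟩
      · simpa [SimpleGraph.Walk.getVert_zero] using hs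
      · simpa [SimpleGraph.Walk.getVert_cons_succ] using hc
    · obtain ⟨i, hi, h1, h2⟩ := IH hc ht
      refine ⟨i + 1, by simp only [SimpleGraph.Walk.length_cons]; omega, ?_, ?_⟩
      · simpa [SimpleGraph.Walk.getVert_cons_succ] using h1
      · simpa [SimpleGraph.Walk.getVert_cons_succ] using h2

lemma sep_finite (hG : IsCCC G) (v w0 : V) :
    {h : Set V | IsHalfspace G h ∧ w0 ∈ h ∧ v ∉ h}.Finite := by
  obtain ⟨W⟩ := hG.1.preconnected v w0
  apply Set.Finite.subset ((Set.finite_Iio W.length).image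
    (fun i => edgeHalf G (W.getVert i) (W.getVert (i + 1))))
  rintro h ⟨hh, hw0, hv⟩
  obtain ⟨i, hi, h1, h2⟩ := walk_cross W hv hw0
  exact ⟨i, hi, (theta_eq hG hh (W.adj_getVert_succ hi) h1 h2).symm⟩

lemma ray_cross {h : Set V} (r : ℕ → V) :
    ∀ N : ℕ, r 0 ∉ h → r N ∈ h → ∃ n : ℕ, r n ∉ h ∧ r (n + 1) ∈ h := by
  intro N
  induction N with
  | zero => intro h0 hN; exact absurd hN h0
  | succ N IH =>
    intro h0 hN
    by_cases hc : r N ∈ h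
    · exact IH h0 hc
    · exact ⟨N, hc, hN⟩

end Stmt14Aux
end CCCR

/-- Lemma `Gromov products of straight points`: for straight
boundary points `x, y, z` and a vertex `v`, if `(y·z)_v < +∞` then at least one of
`(x·y)_v`, `(x·z)_v` is finite. -/
theorem stmt14 {V : Type*} (G : SimpleGraph V) (hG : IsCCC G) (v : V)
    (x y z : Set (Set V))
    (hx : IsBdryPt G x) (hy : IsBdryPt G y) (hz : IsBdryPt G z)
    (hxs : IsStraightPt G x) (hys : IsStraightPt G y) (hzs : IsStraightPt G z)
    (hyz : grom G v y z ≠ ⊤) :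
    grom G v x y ≠ ⊤ ∨ grom G v x z ≠ ⊤ := by
  classical
  by_contra hcon
  push_neg at hcon
  obtain ⟨hxy, hxz⟩ := hcon
  obtain ⟨r, hr, hrs, hrx⟩ := hxs
  open CCCR.Stmt14Aux in
  have dc : ∀ s t : V, G.dist s t = G.dist t s := fun s t => SimpleGraph.dist_comm
  set f : ℕ → Set V := fun n => edgeHalf G (r n) (r (n + 1)) with hfdef
  have fmem : ∀ m k : ℕ, m < k → r k ∈ f m := by
    intro m k hmk
    show G.dist (r k) (r (m + 1)) < G.dist (r k) (r m)
    rw [dc (r k) (r (m + 1)), dc (r k) (r m), hr.2 (m + 1) k hmk, hr.2 m k (by omega)]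
    omega
  have fnot : ∀ m k : ℕ, k ≤ m → r k ∉ f m := by
    intro m k hkm hmem
    have h1 : G.dist (r k) (r (m + 1)) < G.dist (r k) (r m) := hmem
    rw [hr.2 k (m + 1) (by omega), hr.2 k m hkm] at h1
    omega
  have fhalf : ∀ n, IsHalfspace G (f n) := fun n => ⟨r n, r (n + 1), hr.1 n, rfl⟩
  have fnest : ∀ m n : ℕ, m ≤ n → f n ⊆ f m := by
    intro m n hmn
    rcases eq_or_lt_of_le hmn with rfl | hlt
    · exact subset_rfl
    by_contra hsub
    rw [Set.not_subset] at hsub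
    obtain ⟨t, ht1, ht2⟩ := hsub
    exact hrs m n ⟨⟨r (n + 1), fmem m (n + 1) (by omega), fmem n (n + 1) (by omega)⟩,
      ⟨r (m + 1), fmem m (m + 1) (by omega), fnot n (m + 1) (by omega)⟩,
      ⟨t, ht2, ht1⟩, ⟨r m, fnot m m le_rfl, fnot n m (by omega)⟩⟩
  have finj : ∀ m n : ℕ, f m = f n → m = n := by
    intro m n heq
    by_contra hne
    rcases Nat.lt_or_ge m n with hlt | hge
    · exact fnot n (m + 1) (by omega) (heq ▸ fmem m (m + 1) (by omega))
    · exact fnot m (n + 1) (by omega) (heq.symm ▸ fmem n (n + 1) (by omega))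
  have down : ∀ (w : Set (Set V)), IsUltra G w → ∀ m n : ℕ, m ≤ n → f n ∈ w → f m ∈ w := by
    intro w hw m n hmn hfn
    by_contra hfm
    have h1 : (f m)ᶜ ∈ w := by
      by_contra h2
      exact hfm ((hw.2.1 (f m) (fhalf m)).mpr h2)
    obtain ⟨t, ht1, ht2⟩ := hw.2.2 (f n) hfn ((f m)ᶜ) h1
    exact ht2 (fnest m n hmn ht1)
  have sepfin : {h : Set V | IsHalfspace G h ∧ r 0 ∈ h ∧ v ∉ h}.Finite :=
    Stmt14Aux.sep_finite hG v (r 0)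
  have key : ∀ w : Set (Set V), grom G v x w = ⊤ →
      {n : ℕ | f n ∈ w ∧ v ∉ f n}.Infinite := by
    intro w hg
    have hinf : {h : Set V | h ∈ x ∧ h ∈ w ∧ v ∉ h}.Infinite := Set.encard_eq_top_iff.mp hg
    have hsub : {h : Set V | h ∈ x ∧ h ∈ w ∧ v ∉ h} \
        {h : Set V | IsHalfspace G h ∧ r 0 ∈ h ∧ v ∉ h}
        ⊆ f '' {n : ℕ | f n ∈ w ∧ v ∉ f n} := by
      rintro h ⟨⟨hhx, hhw, hhv⟩, hnot⟩
      rw [← hrx] at hhx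
      obtain ⟨hhalf, N, hN⟩ := hhx
      have h0 : r 0 ∉ h := fun h0 => hnot ⟨hhalf, h0, hhv⟩
      obtain ⟨n, hn1, hn2⟩ := Stmt14Aux.ray_cross r N h0 (hN N le_rfl)
      have heq : h = f n := Stmt14Aux.theta_eq hG hhalf (hr.1 n) hn1 hn2
      exact ⟨n, ⟨heq ▸ hhw, heq ▸ hhv⟩, heq.symm⟩
    have himg : (f '' {n : ℕ | f n ∈ w ∧ v ∉ f n}).Infinite :=
      ((hinf.diff sepfin).mono hsub)
    exact Set.Infinite.of_image f himg
  have hy' := key y hxy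
  have hz' := key z hxz
  have hally : ∀ n, f n ∈ y := by
    intro n
    obtain ⟨k, hk, hnk⟩ := hy'.exists_gt n
    exact down y hy.1 n k (le_of_lt hnk) hk.1
  have hallz : ∀ n, f n ∈ z := by
    intro n
    obtain ⟨k, hk, hnk⟩ := hz'.exists_gt n
    exact down z hz.1 n k (le_of_lt hnk) hk.1
  obtain ⟨m0, hm0⟩ := hy'.nonempty
  have hvnot : ∀ n, m0 ≤ n → v ∉ f n := fun n hn hv' => hm0.2 (fnest m0 n hn hv')
  apply hyz
  show ({h : Set V | h ∈ y ∧ h ∈ z ∧ v ∉ h}).encard = ⊤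
  rw [Set.encard_eq_top_iff]
  refine Set.Infinite.mono ?_ ((Set.Ici_infinite m0).image
    (fun a _ b _ hab => finj a b hab))
  rintro h ⟨n, hn, rfl⟩
  exact ⟨hally n, hallz n, hvnot n hn⟩
end
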